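/- arXiv:2406.04241 — 7 statements merged into one kernel-verified Lean document; each statement's English description precedes it below -/
import Mathlib

section
/- Let (E, E₊, θ) be a reflection positive Hilbert space. Then the following are equivalent: (a) (E, E₊, θ) is a maximal reflection positive Hilbert space; (b) there exists a subspace V of E^θ which is dense in E^θ and satisfies V ⊆ E₊ + E^{−θ}; (c) E^θ ⊆ E₊ + E^{−θ}. -/
open MeasureTheory

/-- A triple `(E, E₊, θ)` of a Hilbert space, a (closed) subspace and a unitary involution
is a reflection positive Hilbert space if `⟨ξ, θξ⟩ ≥ 0` for all `ξ ∈ E₊`.  Here we encode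
the reflection positivity condition for an arbitrary subspace `V`. -/
def IsReflectionPositiveOn {𝕜 E : Type*} [RCLike 𝕜] [NormedAddCommGroup E]
    [InnerProductSpace 𝕜 E] (θ : E ≃ₗᵢ[𝕜] E) (V : Submodule 𝕜 E) : Prop :=
  ∀ ξ ∈ V, 0 ≤ RCLike.re (inner 𝕜 ξ (θ ξ) : 𝕜) ∧ RCLike.im (inner 𝕜 ξ (θ ξ) : 𝕜) = 0

section RPaux

variable {𝕜 E : Type*} [RCLike 𝕜] [NormedAddCommGroup E] [InnerProductSpace 𝕜 E]

local notation "⟪" x ", " y "⟫" => @inner 𝕜 _ _ x y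

lemma rp_orth (θ : E ≃ₗᵢ[𝕜] E) {a b : E} (ha : θ a = a) (hb : θ b = -b) :
    ⟪a, b⟫ = 0 := by
  have h := θ.inner_map_map a b
  rw [ha, hb, inner_neg_right] at h
  linear_combination (-(1:𝕜)/2) * h

lemma rp_orth' (θ : E ≃ₗᵢ[𝕜] E) {a b : E} (ha : θ a = -a) (hb : θ b = b) :
    ⟪a, b⟫ = 0 :=
  inner_eq_zero_symm.mpr (rp_orth θ hb ha)

lemma rp_inner_decomp (θ : E ≃ₗᵢ[𝕜] E) {a b : E} (ha : θ a = a) (hb : θ b = -b) :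
    ⟪a + b, θ (a + b)⟫ = ((‖a‖ ^ 2 - ‖b‖ ^ 2 : ℝ) : 𝕜) := by
  rw [map_add, ha, hb]
  rw [inner_add_left, inner_add_right, inner_add_right,
    inner_neg_right, inner_neg_right, rp_orth θ ha hb, rp_orth' θ hb ha,
    inner_self_eq_norm_sq_to_K, inner_self_eq_norm_sq_to_K]
  push_cast
  ring

lemma rp_norm_decomp {a b : E} (h : ⟪a, b⟫ = 0) :
    ‖a + b‖ ^ 2 = ‖a‖ ^ 2 + ‖b‖ ^ 2 := by
  have := @norm_add_sq 𝕜 E _ _ _ a b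
  rw [h] at this
  simpa using this

/-- Projection onto the `+1` eigenspace of `θ`. -/
noncomputable def pPart (θ : E ≃ₗᵢ[𝕜] E) : E →L[𝕜] E :=
  (2 : 𝕜)⁻¹ • (ContinuousLinearMap.id 𝕜 E + (θ.toContinuousLinearEquiv : E →L[𝕜] E))

lemma pPart_apply (θ : E ≃ₗᵢ[𝕜] E) (ξ : E) :
    pPart θ ξ = (2 : 𝕜)⁻¹ • (ξ + θ ξ) := rfl

lemma pPart_add_self (θ : E ≃ₗᵢ[𝕜] E) (ξ : E) :
    pPart θ ξ + pPart θ ξ = ξ + θ ξ := by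
  rw [pPart_apply, ← two_smul 𝕜, smul_smul, mul_inv_cancel₀ (two_ne_zero), one_smul]

lemma theta_pPart (θ : E ≃ₗᵢ[𝕜] E) (hθ : ∀ v : E, θ (θ v) = v) (ξ : E) :
    θ (pPart θ ξ) = pPart θ ξ := by
  rw [pPart_apply, _root_.map_smul, map_add, hθ, add_comm]

lemma theta_mPart (θ : E ≃ₗᵢ[𝕜] E) (hθ : ∀ v : E, θ (θ v) = v) (ξ : E) :
    θ (ξ - pPart θ ξ) = -(ξ - pPart θ ξ) := by
  rw [map_sub, theta_pPart θ hθ]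
  have key : θ ξ - pPart θ ξ + (ξ - pPart θ ξ) = 0 := by
    rw [show θ ξ - pPart θ ξ + (ξ - pPart θ ξ) =
      ξ + θ ξ - (pPart θ ξ + pPart θ ξ) from by abel, pPart_add_self, sub_self]
  exact eq_neg_of_add_eq_zero_left key

lemma pPart_add_sub (θ : E ≃ₗᵢ[𝕜] E) (ξ : E) :
    pPart θ ξ + (ξ - pPart θ ξ) = ξ := by abel

lemma rp_re_inner (θ : E ≃ₗᵢ[𝕜] E) (hθ : ∀ v : E, θ (θ v) = v) (ξ : E) :
    RCLike.re (⟪ξ, θ ξ⟫) = ‖pPart θ ξ‖ ^ 2 - ‖ξ - pPart θ ξ‖ ^ 2 := by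
  conv_lhs => rw [← pPart_add_sub θ ξ]
  rw [rp_inner_decomp θ (theta_pPart θ hθ ξ) (theta_mPart θ hθ ξ), RCLike.ofReal_re]

lemma rp_norm_le (θ : E ≃ₗᵢ[𝕜] E) (hθ : ∀ v : E, θ (θ v) = v)
    {V : Submodule 𝕜 E} (hRP : IsReflectionPositiveOn θ V) {ξ : E} (hξ : ξ ∈ V) :
    ‖ξ - pPart θ ξ‖ ≤ ‖pPart θ ξ‖ := by
  have h1 := (hRP ξ hξ).1
  rw [rp_re_inner θ hθ ξ] at h1
  nlinarith [norm_nonneg (ξ - pPart θ ξ), norm_nonneg (pPart θ ξ)]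

lemma rp_norm_sq_le (θ : E ≃ₗᵢ[𝕜] E) (hθ : ∀ v : E, θ (θ v) = v)
    {V : Submodule 𝕜 E} (hRP : IsReflectionPositiveOn θ V) {ξ : E} (hξ : ξ ∈ V) :
    ‖ξ‖ ^ 2 ≤ 2 * ‖pPart θ ξ‖ ^ 2 := by
  have hd : ‖ξ‖ ^ 2 = ‖pPart θ ξ‖ ^ 2 + ‖ξ - pPart θ ξ‖ ^ 2 := by
    conv_lhs => rw [← pPart_add_sub θ ξ]
    exact rp_norm_decomp (rp_orth θ (theta_pPart θ hθ ξ) (theta_mPart θ hθ ξ))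
  have h := rp_norm_le θ hθ hRP hξ
  have h2 : ‖ξ - pPart θ ξ‖ ^ 2 ≤ ‖pPart θ ξ‖ ^ 2 := pow_le_pow_left₀ (norm_nonneg _) h 2
  linarith

/-- The fixed subspace `E^θ` as a submodule. -/
def fixedSubmodule (θ : E ≃ₗᵢ[𝕜] E) : Submodule 𝕜 E where
  carrier := {v : E | θ v = v}
  add_mem' := by
    intro a b (ha : θ a = a) (hb : θ b = b)
    show θ (a + b) = a + b
    rw [map_add, ha, hb]
  zero_mem' := map_zero θ
  smul_mem' := by
    intro c a (ha : θ a = a)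
    show θ (c • a) = c • a
    rw [_root_.map_smul, ha]

lemma mem_fixedSubmodule (θ : E ≃ₗᵢ[𝕜] E) {v : E} :
    v ∈ fixedSubmodule θ ↔ θ v = v := Iff.rfl

end RPaux

/-- **Characterization of maximal reflection positive Hilbert spaces.**
Let `(E, E₊, θ)` be a reflection positive Hilbert space (`E` a real or complex Hilbert space,
`E₊` a closed subspace, `θ` a unitary involution with `⟨ξ, θξ⟩ ≥ 0` on `E₊`).  TFAE:
(a) `(E, E₊, θ)` is maximal;
(b) there is a subspace `V ⊆ E^θ`, dense in `E^θ`, with `V ⊆ E₊ + E^{-θ}`;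
(c) `E^θ ⊆ E₊ + E^{-θ}`. -/
theorem maximal_RPHS_tfae {𝕜 E : Type*} [RCLike 𝕜] [NormedAddCommGroup E]
    [InnerProductSpace 𝕜 E] [CompleteSpace E]
    (Ep : Submodule 𝕜 E) (hEp : IsClosed (Ep : Set E))
    (θ : E ≃ₗᵢ[𝕜] E) (hθ : ∀ v : E, θ (θ v) = v)
    (hRP : IsReflectionPositiveOn θ Ep) :
    List.TFAE
      [ -- (a) maximality
        ∀ Ep' : Submodule 𝕜 E, IsClosed (Ep' : Set E) → Ep ≤ Ep' →
          IsReflectionPositiveOn θ Ep' → Ep' = Ep,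
        -- (b) a dense subspace of `E^θ` contained in `E₊ + E^{-θ}`
        ∃ V : Submodule 𝕜 E, (V : Set E) ⊆ {v : E | θ v = v} ∧
          {v : E | θ v = v} ⊆ closure (V : Set E) ∧
          ∀ v ∈ V, ∃ a ∈ Ep, ∃ b : E, θ b = -b ∧ v = a + b,
        -- (c) `E^θ ⊆ E₊ + E^{-θ}`
        ∀ v : E, θ v = v → ∃ a ∈ Ep, ∃ b : E, θ b = -b ∧ v = a + b ] := by
  tfae_have 3 → 2 := by
    intro h
    refine ⟨fixedSubmodule θ, fun v hv => hv, subset_closure, fun v hv => h v hv⟩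
  tfae_have 2 → 1 := by
    rintro ⟨V, hV1, hV2, hV3⟩ Ep' hEp'c hle hRP'
    refine le_antisymm (fun ξ hξ => ?_) hle
    have hcl : ξ ∈ closure (Ep : Set E) → ξ ∈ Ep := by
      rw [hEp.closure_eq]; exact id
    apply hcl
    rw [Metric.mem_closure_iff]
    intro ε hε
    -- pPart ξ is in the closure of V
    have hpξ : pPart θ ξ ∈ closure (V : Set E) := hV2 (theta_pPart θ hθ ξ)
    obtain ⟨v, hvV, hvd⟩ := Metric.mem_closure_iff.mp hpξ (ε / 2) (by linarith)
    obtain ⟨a, haEp, b, hb, hvab⟩ := hV3 v hvV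
    have hvfix : θ v = v := hV1 hvV
    -- pPart a = v
    have hpa : pPart θ a = v := by
      have hab : a = v - b := by rw [hvab]; abel
      have hθa : θ a = v + b := by rw [hab, map_sub, hvfix, hb]; abel
      have h1 : a + θ a = v + v := by rw [hθa]; nth_rewrite 1 [hab]; abel
      have h2 := pPart_add_self θ a
      rw [h1] at h2
      have h4 : (2 : 𝕜) • (pPart θ a - v) = 0 := by
        rw [two_smul, show pPart θ a - v + (pPart θ a - v) =
          pPart θ a + pPart θ a - (v + v) from by abel, h2, sub_self]
      rcases smul_eq_zero.mp h4 with h | h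
      · exact absurd h two_ne_zero
      · exact sub_eq_zero.mp h
    -- ξ - a ∈ Ep'
    have hmem : ξ - a ∈ Ep' := Submodule.sub_mem _ hξ (hle haEp)
    have hle2 := rp_norm_le θ hθ hRP' hmem
    have hp_lin : pPart θ (ξ - a) = pPart θ ξ - v := by
      rw [map_sub, hpa]
    have hnorm : ‖ξ - a‖ ^ 2 ≤ 2 * ‖pPart θ ξ - v‖ ^ 2 := by
      have := rp_norm_sq_le θ hθ hRP' hmem
      rwa [hp_lin] at this
    refine ⟨a, haEp, ?_⟩
    rw [dist_eq_norm]
    have hd : ‖pPart θ ξ - v‖ < ε / 2 := by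
      rw [← dist_eq_norm]; exact hvd
    nlinarith [norm_nonneg (ξ - a), norm_nonneg (pPart θ ξ - v), hε]
  tfae_have 1 → 3 := by
    intro h1 x hx
    classical
    -- D = pPart θ '' Ep, a closed submodule
    set D : Submodule 𝕜 E := Submodule.map (pPart θ : E →ₗ[𝕜] E) Ep with hD
    have hDclosed : IsClosed (D : Set E) := by
      haveI : CompleteSpace Ep := hEp.completeSpace_coe
      have hal : AntilipschitzWith (⟨Real.sqrt 2, Real.sqrt_nonneg 2⟩ : NNReal)
          (fun a : Ep => pPart θ (a : E)) := by
        apply AntilipschitzWith.of_le_mul_dist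
        intro a c
        have hmem : (a : E) - (c : E) ∈ Ep := Submodule.sub_mem _ a.2 c.2
        have h2 := rp_norm_sq_le θ hθ hRP hmem
        have hsub : pPart θ ((a : E) - (c : E)) = pPart θ a - pPart θ c := map_sub _ _ _
        rw [hsub] at h2
        rw [Subtype.dist_eq, dist_eq_norm, dist_eq_norm]
        show ‖(a:E) - (c:E)‖ ≤ Real.sqrt 2 * ‖pPart θ (a:E) - pPart θ (c:E)‖
        calc ‖(a:E) - (c:E)‖ = Real.sqrt (‖(a:E) - (c:E)‖ ^ 2) :=
              (Real.sqrt_sq (norm_nonneg _)).symm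
          _ ≤ Real.sqrt (2 * ‖pPart θ (a:E) - pPart θ (c:E)‖ ^ 2) := Real.sqrt_le_sqrt h2
          _ = Real.sqrt 2 * ‖pPart θ (a:E) - pPart θ (c:E)‖ := by
              rw [Real.sqrt_mul (by norm_num), Real.sqrt_sq (norm_nonneg _)]
      have hrange : Set.range (fun a : Ep => pPart θ (a : E)) = (D : Set E) := by
        ext y
        simp [hD, Submodule.mem_map, Set.range]
      have huc : UniformContinuous (fun a : Ep => pPart θ (a : E)) :=
        (pPart θ).uniformContinuous.comp uniformContinuous_subtype_val
      rw [← hrange]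
      exact hal.isClosed_range huc
    haveI : CompleteSpace Ep := hEp.completeSpace_coe
    -- W = E^θ ∩ Dᗮ
    set W : Submodule 𝕜 E := fixedSubmodule θ ⊓ Dᗮ with hW
    have hWclosed : IsClosed (W : Set E) := by
      have h1 : IsClosed ((fixedSubmodule θ : Submodule 𝕜 E) : Set E) :=
        isClosed_eq θ.continuous continuous_id
      exact h1.inter (Submodule.isClosed_orthogonal D)
    -- Q v = v - proj_Ep v
    set P : E →L[𝕜] E := Ep.subtypeL.comp (Ep.orthogonalProjectionOnto) with hP
    set Q : E →L[𝕜] E := ContinuousLinearMap.id 𝕜 E - P with hQ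
    have hQapply : ∀ v : E, Q v = v - Ep.orthogonalProjectionOnto v := fun v => rfl
    set Ep' : Submodule 𝕜 E := Submodule.comap (Q : E →ₗ[𝕜] E) W with hEp'
    have hEp'mem : ∀ v : E, v ∈ Ep' ↔ v - Ep.orthogonalProjectionOnto v ∈ W := fun v => Iff.rfl
    have hEp'closed : IsClosed (Ep' : Set E) := by
      have : (Ep' : Set E) = Q ⁻¹' (W : Set E) := rfl
      rw [this]
      exact hWclosed.preimage Q.continuous
    have hleEp' : Ep ≤ Ep' := by
      intro a ha
      rw [hEp'mem]
      rw [show (Ep.orthogonalProjectionOnto a : E) = a from Submodule.starProjection_eq_self_iff.mpr ha, sub_self]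
      exact W.zero_mem
    -- inner 𝕜 products of Ep elements against W elements vanish
    have hEpW : ∀ a ∈ Ep, ∀ w ∈ W, (inner 𝕜 a w : 𝕜) = 0 := by
      intro a ha w hw
      obtain ⟨hwfix, hwD⟩ := hw
      have hwfix' : θ w = w := hwfix
      have hsplit : (inner 𝕜 a w : 𝕜) =
          inner 𝕜 (pPart θ a) w + inner 𝕜 (a - pPart θ a) w := by
        rw [← inner_add_left, pPart_add_sub]
      rw [hsplit]
      have h1 : (inner 𝕜 (pPart θ a) w : 𝕜) = 0 := by
        have : pPart θ a ∈ D := ⟨a, ha, rfl⟩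
        exact (Submodule.mem_orthogonal D w).mp hwD _ this
      have h2 : (inner 𝕜 (a - pPart θ a) w : 𝕜) =
          0 := rp_orth' θ (theta_mPart θ hθ a) hwfix'
      rw [h1, h2, add_zero]
    -- Ep' is reflection positive
    have hRP' : IsReflectionPositiveOn θ Ep' := by
      intro v hv
      set a : E := (Ep.orthogonalProjectionOnto v : E) with haDef
      set w : E := v - a with hwDef
      have haEp : a ∈ Ep := (Ep.orthogonalProjectionOnto v).2
      have hwW : w ∈ W := (hEp'mem v).mp hv
      obtain ⟨hwfix, hwD⟩ := hwW
      have hwfix' : θ w = w := hwfix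
      have hvaw : v = a + w := by rw [hwDef]; abel
      have hwa : (inner 𝕜 a w : 𝕜) = 0 := hEpW a haEp w ⟨hwfix, hwD⟩
      have hwθa : (inner 𝕜 w (θ a) : 𝕜) = 0 := by
        have := hEpW a haEp w ⟨hwfix, hwD⟩
        -- ⟪w, θ a⟫ = ⟪θ w, θ a⟫... use inner_map_map
        have h2 : (inner 𝕜 w (θ a) : 𝕜) = inner 𝕜 (θ w) (θ (θ a)) := (θ.inner_map_map w (θ a)).symm
        rw [hθ, hwfix'] at h2
        rw [h2, ← inner_conj_symm, hwa, map_zero]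
      have hexpand : (inner 𝕜 v (θ v) : 𝕜) = inner 𝕜 a (θ a) + inner 𝕜 w w := by
        rw [hvaw, map_add, hwfix', inner_add_left, inner_add_right, inner_add_right,
          hwa, hwθa]
        ring
      constructor
      · rw [hexpand, map_add]
        have := (hRP a haEp).1
        have h2 : 0 ≤ RCLike.re (inner 𝕜 w w : 𝕜) := inner_self_nonneg
        linarith
      · rw [hexpand, map_add, (hRP a haEp).2, inner_self_im, add_zero]
    -- maximality
    have hEq : Ep' = Ep := h1 Ep' hEp'closed hleEp' hRP'
    -- decompose x relative to D
    haveI : CompleteSpace D := hDclosed.completeSpace_coe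
    set d : E := (D.orthogonalProjectionOnto x : E) with hdDef
    set z : E := x - d with hzDef
    have hdD : d ∈ D := (D.orthogonalProjectionOnto x).2
    have hzD : z ∈ Dᗮ := Submodule.sub_starProjection_mem_orthogonal (K := D) x
    have hdfix : θ d = d := by
      obtain ⟨a, _, ha2⟩ := hdD
      rw [← ha2]
      exact theta_pPart θ hθ a
    have hzfix : θ z = z := by
      rw [hzDef, map_sub, hx, hdfix]
    have hzW : z ∈ W := ⟨hzfix, hzD⟩
    -- z ∈ Epᗮ
    have hzEpOrth : z ∈ Epᗮ := by
      rw [Submodule.mem_orthogonal]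
      intro a ha
      exact hEpW a ha z hzW
    have hzEp' : z ∈ Ep' := by
      rw [hEp'mem]
      rw [Submodule.orthogonalProjectionOnto_apply_of_mem_orthogonal hzEpOrth]
      simpa using hzW
    have hzEp : z ∈ Ep := hEq ▸ hzEp'
    have hz0 : z = 0 := by
      have := (Submodule.mem_orthogonal Ep z).mp hzEpOrth z hzEp
      exact inner_self_eq_zero.mp this
    have hxd : x = d := sub_eq_zero.mp hz0
    obtain ⟨a, haEp, ha2⟩ := hdD
    refine ⟨a, haEp, -(a - pPart θ a), by rw [map_neg, theta_mPart θ hθ a], ?_⟩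
    rw [hxd, ← ha2]
    abel
  tfae_finish
end

section
/- The complex linear span of {q_z : z ∈ ℂ_r} is dense in C([0,∞],ℂ) with respect to the supremum norm, and the real linear span of {q_z : z ∈ (0,∞)} is dense in C([0,∞],ℝ) with respect to the supremum norm. -/
open scoped ENNReal NNReal

/-- We model the one-point compactification `[0,∞]` of `[0,∞)` by `ℝ≥0∞`.
For `z ∈ ℂ` with `Re z > 0`, `q_z : [0,∞] → ℂ` is the continuous function with
`q_z(λ) = (λ+1)/(λ+z)` for `λ ∈ [0,∞)` and `q_z(∞) = 1`; here we describe the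
set of all such continuous functions by their values. -/
def qSetC : Set C(ℝ≥0∞, ℂ) :=
  {f | ∃ z : ℂ, 0 < z.re ∧ f ∞ = 1 ∧
    ∀ t : ℝ≥0, f (t : ℝ≥0∞) = (((t : ℝ) : ℂ) + 1) / (((t : ℝ) : ℂ) + z)}

/-- The corresponding real-valued functions `q_z` for real `z ∈ (0,∞)`. -/
def qSetR : Set C(ℝ≥0∞, ℝ) :=
  {f | ∃ z : ℝ, 0 < z ∧ f ∞ = 1 ∧
    ∀ t : ℝ≥0, f (t : ℝ≥0∞) = ((t : ℝ) + 1) / ((t : ℝ) + z)}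

namespace QD

open RCLike Filter

/-- The function `u(t) = 1/(t+1)` on `[0,∞]`. -/
noncomputable def uu : C(ℝ≥0∞, ℝ) :=
  ⟨fun t => ((t + 1)⁻¹).toReal, by
    rw [continuous_iff_continuousAt]
    intro t
    have h2 : Continuous (fun t : ℝ≥0∞ => (t + 1)⁻¹) := by continuity
    have h1 : ContinuousAt ENNReal.toReal ((t + 1)⁻¹) := by
      apply ENNReal.tendsto_toReal
      simp
    show ContinuousAt (ENNReal.toReal ∘ fun t : ℝ≥0∞ => (t + 1)⁻¹) t
    exact ContinuousAt.comp h1 h2.continuousAt⟩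

lemma uu_nonneg (t : ℝ≥0∞) : 0 ≤ uu t := ENNReal.toReal_nonneg

lemma uu_le_one (t : ℝ≥0∞) : uu t ≤ 1 := by
  have h : (t + 1)⁻¹ ≤ (1 : ℝ≥0∞) := by
    simp [ENNReal.inv_le_one]
  calc uu t = ((t + 1)⁻¹).toReal := rfl
    _ ≤ (1 : ℝ≥0∞).toReal := ENNReal.toReal_mono (by simp) h
    _ = 1 := by simp

lemma uu_top : uu ∞ = 0 := by simp [uu]

lemma uu_coe (t : ℝ≥0) : uu t = ((t : ℝ) + 1)⁻¹ := by
  simp [uu]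
  rw [ENNReal.toReal_add (by simp) (by simp), ENNReal.toReal_one, ENNReal.coe_toReal]

lemma uu_inj : Function.Injective uu := by
  intro a b hab
  have ha : (a + 1)⁻¹ ≠ ⊤ := by simp
  have hb : (b + 1)⁻¹ ≠ ⊤ := by simp
  have : (a + 1)⁻¹ = (b + 1)⁻¹ := by
    rwa [← ENNReal.toReal_eq_toReal_iff' ha hb]
  have h2 : a + 1 = b + 1 := by
    rw [← inv_inv (a + 1), this, inv_inv]
  exact (ENNReal.add_left_inj (by simp)).mp h2

variable {𝕜 : Type*} [RCLike 𝕜]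

lemma ne_zero_of_re_pos' {w : 𝕜} (h : 0 < re w) : w ≠ 0 := by
  intro h0
  rw [h0] at h
  simp at h

lemma re_d (z : 𝕜) (t : ℝ≥0∞) :
    re ((1 : 𝕜) - (uu t : 𝕜) + z * (uu t : 𝕜)) = 1 - uu t + re z * uu t := by
  simp [map_add, map_sub, mul_comm]

lemma min_le_norm_d {z : 𝕜} (hz : 0 < re z) (t : ℝ≥0∞) :
    min 1 (re z) ≤ ‖(1 : 𝕜) - (uu t : 𝕜) + z * (uu t : 𝕜)‖ := by
  have h1 := uu_nonneg t
  have h2 := uu_le_one t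
  have h3 : re ((1 : 𝕜) - (uu t : 𝕜) + z * (uu t : 𝕜)) ≤
      ‖(1 : 𝕜) - (uu t : 𝕜) + z * (uu t : 𝕜)‖ := re_le_norm _
  rw [re_d] at h3
  rcases le_total 1 (re z) with h | h
  · have : min 1 (re z) = 1 := min_eq_left h
    rw [this]
    nlinarith
  · have : min 1 (re z) = re z := min_eq_right h
    rw [this]
    nlinarith

lemma d_ne_zero {z : 𝕜} (hz : 0 < re z) (t : ℝ≥0∞) :
    (1 : 𝕜) - (uu t : 𝕜) + z * (uu t : 𝕜) ≠ 0 := by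
  intro h0
  have := min_le_norm_d hz t
  rw [h0] at this
  simp at this
  rcases this with h | h
  · linarith
  · linarith

/-- The function `q_z` on `[0,∞]`, written as `(1 - u + z u)⁻¹` with `u = 1/(t+1)`. -/
noncomputable def q (z : 𝕜) (hz : 0 < re z) : C(ℝ≥0∞, 𝕜) :=
  ⟨fun t => ((1 : 𝕜) - (uu t : 𝕜) + z * (uu t : 𝕜))⁻¹, by
    apply Continuous.inv₀
    · have hu : Continuous fun t : ℝ≥0∞ => ((uu t : ℝ) : 𝕜) :=
        RCLike.continuous_ofReal.comp uu.continuous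
      continuity
    · exact fun t => d_ne_zero hz t⟩

lemma q_apply (z : 𝕜) (hz : 0 < re z) (t : ℝ≥0∞) :
    q z hz t = ((1 : 𝕜) - (uu t : 𝕜) + z * (uu t : 𝕜))⁻¹ := rfl

lemma q_top (z : 𝕜) (hz : 0 < re z) : q z hz ∞ = 1 := by
  simp [q_apply, uu_top]

lemma q_coe (z : 𝕜) (hz : 0 < re z) (t : ℝ≥0) :
    q z hz t = (((t : ℝ) : 𝕜) + 1) / (((t : ℝ) : 𝕜) + z) := by
  rw [q_apply, uu_coe]
  have h1 : ((t : ℝ) : 𝕜) + 1 ≠ 0 := by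
    apply ne_zero_of_re_pos'
    simp
    positivity
  have h2 : ((t : ℝ) : 𝕜) + z ≠ 0 := by
    apply ne_zero_of_re_pos'
    simp
    positivity
  have h3 : ((((t : ℝ) + 1)⁻¹ : ℝ) : 𝕜) = (((t : ℝ) : 𝕜) + 1)⁻¹ := by
    push_cast
    ring
  have h4 : (1 : 𝕜) - (((t : ℝ) : 𝕜) + 1)⁻¹ + z * (((t : ℝ) : 𝕜) + 1)⁻¹
      = (((t : ℝ) : 𝕜) + z) / (((t : ℝ) : 𝕜) + 1) := by
    field_simp
    ring
  rw [h3, h4, inv_div]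

lemma eq_q {f : C(ℝ≥0∞, 𝕜)} {z : 𝕜} (hz : 0 < re z) (h1 : f ∞ = 1)
    (h2 : ∀ t : ℝ≥0, f (t : ℝ≥0∞) = (((t : ℝ) : 𝕜) + 1) / (((t : ℝ) : 𝕜) + z)) :
    f = q z hz := by
  ext t
  induction t using ENNReal.recTopCoe with
  | top => rw [h1, q_top]
  | coe t => rw [h2, q_coe]

lemma q_mem_iff (Q : Set C(ℝ≥0∞, 𝕜))
    (hQ : ∀ f : C(ℝ≥0∞, 𝕜), f ∈ Q ↔ ∃ z : 𝕜, 0 < re z ∧ f ∞ = 1 ∧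
      ∀ t : ℝ≥0, f (t : ℝ≥0∞) = (((t : ℝ) : 𝕜) + 1) / (((t : ℝ) : 𝕜) + z))
    (f : C(ℝ≥0∞, 𝕜)) : f ∈ Q ↔ ∃ z : 𝕜, ∃ hz : 0 < re z, f = q z hz := by
  rw [hQ]
  constructor
  · rintro ⟨z, hz, h1, h2⟩
    exact ⟨z, hz, eq_q hz h1 h2⟩
  · rintro ⟨z, hz, rfl⟩
    exact ⟨z, hz, q_top z hz, q_coe z hz⟩

lemma q_mul_q {z w : 𝕜} (hz : 0 < re z) (hw : 0 < re w) (hzw : z ≠ w) :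
    q z hz * q w hw = ((1 - z) / (w - z)) • q z hz + ((w - 1) / (w - z)) • q w hw := by
  ext t
  have hdz := d_ne_zero hz t
  have hdw := d_ne_zero hw t
  have hwz : w - z ≠ 0 := sub_ne_zero.mpr (Ne.symm hzw)
  simp only [ContinuousMap.mul_apply, ContinuousMap.add_apply, ContinuousMap.smul_apply,
    smul_eq_mul, q_apply]
  have ea : (1 - (uu t : 𝕜) + z * (uu t : 𝕜)) * (1 - (uu t : 𝕜) + z * (uu t : 𝕜))⁻¹ = 1 := mul_inv_cancel₀ hdz
  have eb : (1 - (uu t : 𝕜) + w * (uu t : 𝕜)) * (1 - (uu t : 𝕜) + w * (uu t : 𝕜))⁻¹ = 1 := mul_inv_cancel₀ hdw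
  have ec : (w - z) * (w - z)⁻¹ = 1 := mul_inv_cancel₀ hwz
  linear_combination (-(1 - (uu t : 𝕜) + z * (uu t : 𝕜))⁻¹ * (1 - (uu t : 𝕜) + w * (uu t : 𝕜))⁻¹) * ec + (w - z)⁻¹ * (1 - z) * (1 - (uu t : 𝕜) + z * (uu t : 𝕜))⁻¹ * eb + (w - 1) * (w - z)⁻¹ * (1 - (uu t : 𝕜) + w * (uu t : 𝕜))⁻¹ * ea

lemma norm_q_sub_q_le {z w : 𝕜} (hz : 0 < re z) (hw : 0 < re w) (hle : re z ≤ re w) :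
    ‖q w hw - q z hz‖ ≤ ‖w - z‖ / (min 1 (re z))^2 := by
  have hc : 0 < min 1 (re z) := lt_min one_pos hz
  apply ContinuousMap.norm_le _ (by positivity) |>.mpr
  intro t
  simp only [ContinuousMap.sub_apply, q_apply]
  have hdz := d_ne_zero hz t
  have hdw := d_ne_zero hw t
  have key : ((1 : 𝕜) - (uu t : 𝕜) + w * (uu t : 𝕜))⁻¹ - ((1 : 𝕜) - (uu t : 𝕜) + z * (uu t : 𝕜))⁻¹
      = ((z - w) * (uu t : 𝕜)) * (((1 : 𝕜) - (uu t : 𝕜) + w * (uu t : 𝕜))⁻¹ *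
        ((1 : 𝕜) - (uu t : 𝕜) + z * (uu t : 𝕜))⁻¹) := by
    have ea : (1 - (uu t : 𝕜) + z * (uu t : 𝕜)) * (1 - (uu t : 𝕜) + z * (uu t : 𝕜))⁻¹ = 1 := mul_inv_cancel₀ hdz
    have eb : (1 - (uu t : 𝕜) + w * (uu t : 𝕜)) * (1 - (uu t : 𝕜) + w * (uu t : 𝕜))⁻¹ = 1 := mul_inv_cancel₀ hdw
    linear_combination (-(1 - (uu t : 𝕜) + w * (uu t : 𝕜))⁻¹) * ea + (1 - (uu t : 𝕜) + z * (uu t : 𝕜))⁻¹ * eb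
  rw [key]
  rw [norm_mul, norm_mul, norm_mul, norm_inv, norm_inv]
  have h1 : ‖(z - w)‖ = ‖w - z‖ := by rw [← norm_neg]; ring_nf
  have h2 : ‖((uu t : ℝ) : 𝕜)‖ ≤ 1 := by
    rw [norm_ofReal, abs_of_nonneg (uu_nonneg t)]
    exact uu_le_one t
  have h3 : min 1 (re z) ≤ ‖(1 : 𝕜) - (uu t : 𝕜) + z * (uu t : 𝕜)‖ := min_le_norm_d hz t
  have h4 : min 1 (re z) ≤ ‖(1 : 𝕜) - (uu t : 𝕜) + w * (uu t : 𝕜)‖ := by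
    refine le_trans ?_ (min_le_norm_d hw t)
    exact min_le_min le_rfl hle
  have h5 : ‖(1 : 𝕜) - (uu t : 𝕜) + z * (uu t : 𝕜)‖⁻¹ ≤ (min 1 (re z))⁻¹ :=
    inv_anti₀ hc h3
  have h6 : ‖(1 : 𝕜) - (uu t : 𝕜) + w * (uu t : 𝕜)‖⁻¹ ≤ (min 1 (re z))⁻¹ :=
    inv_anti₀ hc h4
  rw [h1]
  calc ‖w - z‖ * ‖((uu t : ℝ) : 𝕜)‖ *
      (‖(1 : 𝕜) - (uu t : 𝕜) + w * (uu t : 𝕜)‖⁻¹ * ‖(1 : 𝕜) - (uu t : 𝕜) + z * (uu t : 𝕜)‖⁻¹)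
      ≤ ‖w - z‖ * 1 * ((min 1 (re z))⁻¹ * (min 1 (re z))⁻¹) := by
        apply mul_le_mul
        · exact mul_le_mul_of_nonneg_left h2 (norm_nonneg _)
        · apply mul_le_mul h6 h5 (by positivity) (by positivity)
        · positivity
        · positivity
    _ = ‖w - z‖ / (min 1 (re z))^2 := by
        rw [mul_one, div_eq_mul_inv, sq, mul_inv]

lemma re_add_inv_pos (z : 𝕜) (hz : 0 < re z) (n : ℕ) :
    0 < re (z + ((((n : ℝ) + 1)⁻¹ : ℝ) : 𝕜)) := by
  rw [map_add, ofReal_re]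
  have : (0:ℝ) < ((n : ℝ) + 1)⁻¹ := by positivity
  linarith

lemma tendsto_q_aux {z : 𝕜} (hz : 0 < re z) :
    Filter.Tendsto (fun n : ℕ => q (z + ((((n : ℝ) + 1)⁻¹ : ℝ) : 𝕜)) (re_add_inv_pos z hz n))
      Filter.atTop (nhds (q z hz)) := by
  rw [tendsto_iff_norm_sub_tendsto_zero]
  apply squeeze_zero (g := fun n : ℕ => ((n : ℝ) + 1)⁻¹ / (min 1 (re z))^2)
    (fun n => norm_nonneg _)
  · intro n
    have hle : re z ≤ re (z + ((((n : ℝ) + 1)⁻¹ : ℝ) : 𝕜)) := by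
      rw [map_add, ofReal_re]
      have : (0:ℝ) ≤ ((n : ℝ) + 1)⁻¹ := by positivity
      linarith
    have h := norm_q_sub_q_le hz (re_add_inv_pos z hz n) hle
    have heq : ‖z + ((((n : ℝ) + 1)⁻¹ : ℝ) : 𝕜) - z‖ = ((n : ℝ) + 1)⁻¹ := by
      rw [add_sub_cancel_left, norm_ofReal, abs_of_nonneg (by positivity)]
    rwa [heq] at h
  · have h0 : Filter.Tendsto (fun n : ℕ => ((n : ℝ) + 1)⁻¹) Filter.atTop (nhds 0) :=
      tendsto_one_div_add_atTop_nhds_zero_nat |>.congr (by intro n; rw [one_div])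
    simpa using h0.div_const ((min 1 (re z))^2)

theorem dense_span (Q : Set C(ℝ≥0∞, 𝕜))
    (hQ : ∀ f : C(ℝ≥0∞, 𝕜), f ∈ Q ↔ ∃ z : 𝕜, 0 < re z ∧ f ∞ = 1 ∧
      ∀ t : ℝ≥0, f (t : ℝ≥0∞) = (((t : ℝ) : 𝕜) + 1) / (((t : ℝ) : 𝕜) + z)) :
    Dense ((Submodule.span 𝕜 Q : Submodule 𝕜 C(ℝ≥0∞, 𝕜)) : Set C(ℝ≥0∞, 𝕜)) := by
  set S : Submodule 𝕜 C(ℝ≥0∞, 𝕜) := (Submodule.span 𝕜 Q).topologicalClosure with hSdef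
  have hq_memQ : ∀ (z : 𝕜) (hz : 0 < re z), q z hz ∈ Q := fun z hz =>
    (q_mem_iff Q hQ _).mpr ⟨z, hz, rfl⟩
  have hq_mem : ∀ (z : 𝕜) (hz : 0 < re z), q z hz ∈ S := fun z hz =>
    Submodule.le_topologicalClosure _ (Submodule.subset_span (hq_memQ z hz))
  have hSclosed : IsClosed (S : Set C(ℝ≥0∞, 𝕜)) := Submodule.isClosed_topologicalClosure _
  have hqq : ∀ (z : 𝕜) (hz : 0 < re z) (w : 𝕜) (hw : 0 < re w), q z hz * q w hw ∈ S := by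
    intro z hz w hw
    by_cases hzw : z = w
    · subst hzw
      have h1 : ∀ n : ℕ,
          q z hz * q (z + ((((n : ℝ) + 1)⁻¹ : ℝ) : 𝕜)) (re_add_inv_pos z hz n) ∈ S := by
        intro n
        have hne : z ≠ z + ((((n : ℝ) + 1)⁻¹ : ℝ) : 𝕜) := by
          intro h
          have h2 : ((((n : ℝ) + 1)⁻¹ : ℝ) : 𝕜) = 0 := by
            have := congrArg (fun x => x - z) h
            simpa using this.symm
          rw [ofReal_eq_zero] at h2
          have : (0:ℝ) < ((n : ℝ) + 1)⁻¹ := by positivity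
          linarith [h2 ▸ this]
        rw [q_mul_q hz (re_add_inv_pos z hz n) hne]
        exact S.add_mem (S.smul_mem _ (hq_mem _ _)) (S.smul_mem _ (hq_mem _ _))
      have h2 : Filter.Tendsto
          (fun n : ℕ => q z hz * q (z + ((((n : ℝ) + 1)⁻¹ : ℝ) : 𝕜)) (re_add_inv_pos z hz n))
          Filter.atTop (nhds (q z hz * q z hz)) :=
        tendsto_const_nhds.mul (tendsto_q_aux hz)
      exact hSclosed.mem_of_tendsto h2 (Filter.Eventually.of_forall h1)
    · rw [q_mul_q hz hw hzw]
      exact S.add_mem (S.smul_mem _ (hq_mem _ _)) (S.smul_mem _ (hq_mem _ _))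
  have hstep1 : ∀ (z : 𝕜) (hz : 0 < re z) (g : C(ℝ≥0∞, 𝕜)), g ∈ S → q z hz * g ∈ S := by
    intro z hz
    set T : C(ℝ≥0∞, 𝕜) →L[𝕜] C(ℝ≥0∞, 𝕜) :=
      ContinuousLinearMap.mul 𝕜 C(ℝ≥0∞, 𝕜) (q z hz) with hT
    have hsub : Submodule.span 𝕜 Q ≤ S.comap (T : C(ℝ≥0∞, 𝕜) →ₗ[𝕜] C(ℝ≥0∞, 𝕜)) := by
      rw [Submodule.span_le]
      intro f hf
      obtain ⟨w, hw, rfl⟩ := (q_mem_iff Q hQ f).mp hf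
      exact hqq z hz w hw
    have hcl : IsClosed ((S.comap (T : C(ℝ≥0∞, 𝕜) →ₗ[𝕜] C(ℝ≥0∞, 𝕜))) : Set C(ℝ≥0∞, 𝕜)) :=
      hSclosed.preimage T.continuous
    intro g hg
    exact (Submodule.topologicalClosure_minimal _ hsub hcl) hg
  have hmulS : ∀ f ∈ S, ∀ g ∈ S, f * g ∈ S := by
    intro f hf g hg
    set T : C(ℝ≥0∞, 𝕜) →L[𝕜] C(ℝ≥0∞, 𝕜) :=
      (ContinuousLinearMap.mul 𝕜 C(ℝ≥0∞, 𝕜)).flip g with hT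
    have hsub : Submodule.span 𝕜 Q ≤ S.comap (T : C(ℝ≥0∞, 𝕜) →ₗ[𝕜] C(ℝ≥0∞, 𝕜)) := by
      rw [Submodule.span_le]
      intro f' hf'
      obtain ⟨w, hw, rfl⟩ := (q_mem_iff Q hQ f').mp hf'
      exact hstep1 w hw g hg
    have hcl : IsClosed ((S.comap (T : C(ℝ≥0∞, 𝕜) →ₗ[𝕜] C(ℝ≥0∞, 𝕜))) : Set C(ℝ≥0∞, 𝕜)) :=
      hSclosed.preimage T.continuous
    exact (Submodule.topologicalClosure_minimal _ hsub hcl) hf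
  have hone_pos : (0:ℝ) < re (1 : 𝕜) := by simp
  have honeQ : (1 : C(ℝ≥0∞, 𝕜)) ∈ Q := by
    have h1 : (1 : C(ℝ≥0∞, 𝕜)) = q 1 hone_pos := by
      ext t
      rw [q_apply]
      simp
    rw [h1]
    exact hq_memQ _ _
  have honeS : (1 : C(ℝ≥0∞, 𝕜)) ∈ S :=
    Submodule.le_topologicalClosure _ (Submodule.subset_span honeQ)
  have hstar_q : ∀ (z : 𝕜) (hz : 0 < re z),
      star (q z hz) = q ((starRingEnd 𝕜) z) (by rwa [conj_re]) := by
    intro z hz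
    ext t
    rw [ContinuousMap.star_apply, q_apply, q_apply, RCLike.star_def, map_inv₀]
    congr 1
    rw [map_add, map_sub, map_one, map_mul, conj_ofReal]
  have hstar_span : ∀ f ∈ Submodule.span 𝕜 Q, star f ∈ Submodule.span 𝕜 Q := by
    intro f hf
    induction hf using Submodule.span_induction with
    | mem x hx =>
      obtain ⟨z, hz, rfl⟩ := (q_mem_iff Q hQ x).mp hx
      rw [hstar_q z hz]
      exact Submodule.subset_span (hq_memQ _ _)
    | zero => rw [star_zero]; exact Submodule.zero_mem _
    | add x y hx hy ihx ihy => rw [star_add]; exact Submodule.add_mem _ ihx ihy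
    | smul a x hx ih => rw [star_smul]; exact Submodule.smul_mem _ _ ih
  have hstarS : ∀ f ∈ S, star f ∈ S := by
    intro f hf
    have h1 : f ∈ closure ((Submodule.span 𝕜 Q : Submodule 𝕜 C(ℝ≥0∞, 𝕜)) : Set C(ℝ≥0∞, 𝕜)) := by
      rw [← Submodule.topologicalClosure_coe]
      exact hf
    have h2 := map_mem_closure continuous_star h1 (fun x hx => hstar_span x hx)
    rw [← Submodule.topologicalClosure_coe] at h2
    exact h2
  set A : StarSubalgebra 𝕜 C(ℝ≥0∞, 𝕜) :=
    { toSubalgebra := S.toSubalgebra honeS (fun x y hx hy => hmulS x hx y hy)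
      star_mem' := fun hx => hstarS _ hx } with hA
  have h2pos : (0:ℝ) < re (2 : 𝕜) := by simp
  have hsep : A.SeparatesPoints := by
    intro x y hxy
    refine ⟨⇑(q (2:𝕜) h2pos), ⟨q (2:𝕜) h2pos, hq_mem _ _, rfl⟩, ?_⟩
    intro heq
    apply hxy
    apply uu_inj
    rw [q_apply, q_apply] at heq
    rw [inv_inj] at heq
    have h4 : ((uu x : ℝ) : 𝕜) - ((uu y : ℝ) : 𝕜) = 0 := by linear_combination heq
    have h3 := sub_eq_zero.mp h4
    exact_mod_cast h3
  have hSW := ContinuousMap.starSubalgebra_topologicalClosure_eq_top_of_separatesPoints A hsep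
  rw [dense_iff_closure_eq]
  have h1 : closure (A : Set C(ℝ≥0∞, 𝕜)) = Set.univ := by
    rw [← StarSubalgebra.topologicalClosure_coe, hSW]
    rfl
  have h2 : (A : Set C(ℝ≥0∞, 𝕜)) =
      closure ((Submodule.span 𝕜 Q : Submodule 𝕜 C(ℝ≥0∞, 𝕜)) : Set C(ℝ≥0∞, 𝕜)) := by
    rw [← Submodule.topologicalClosure_coe]
    rfl
  rw [h2, closure_closure] at h1
  exact h1

end QD

/-- **Density of the functions `q_z`.**
The complex linear span of `{q_z : Re z > 0}` is dense in `C([0,∞], ℂ)` and the real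
linear span of `{q_z : z ∈ (0,∞)}` is dense in `C([0,∞], ℝ)` (for the supremum norm,
i.e. the canonical topology of `C([0,∞], ·)` with `[0,∞]` compact). -/
theorem span_q_dense :
    Dense ((Submodule.span ℂ qSetC : Submodule ℂ C(ℝ≥0∞, ℂ)) : Set C(ℝ≥0∞, ℂ)) ∧
    Dense ((Submodule.span ℝ qSetR : Submodule ℝ C(ℝ≥0∞, ℝ)) : Set C(ℝ≥0∞, ℝ)) := by
  constructor
  · apply QD.dense_span
    intro f
    exact Iff.rfl
  · apply QD.dense_span
    intro f
    exact Iff.rfl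
end

section
/- Let ν and ν' be finite Borel measures on [0,∞]. Then Ψ_ν(p) = Ψ_{ν'}(p) for all p ∈ ℝ ∖ {0} if and only if ν = ν'. -/
open MeasureTheory Filter Topology
open scoped ENNReal

/-- For a finite Borel measure `ν` on `[0,∞]` (modelled by `ℝ≥0∞`),
`Ψ_ν(p) = (1/π) ∫_{[0,∞]} (1+λ²)/(p²+λ²) dν(λ)`, where the integrand takes the
value `1` at `λ = ∞`. -/
noncomputable def Psi (ν : Measure ℝ≥0∞) (p : ℝ) : ℝ :=
  (1 / Real.pi) *
    ∫ l, (if l = ∞ then 1 else (1 + l.toReal ^ 2) / (p ^ 2 + l.toReal ^ 2)) ∂ν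

namespace PsiAux


/-- the basic kernel `l ↦ 1/(a + l²)` (value `0` at `∞`). -/
noncomputable def gfun (a : ℝ) : ℝ≥0∞ → ℝ := fun l => ((ENNReal.ofReal a + l ^ 2)⁻¹).toReal

lemma inner_ne_zero {a : ℝ} (ha : 0 < a) (l : ℝ≥0∞) : ENNReal.ofReal a + l ^ 2 ≠ 0 := by
  simp [ENNReal.ofReal_eq_zero, not_le, ha]

lemma gfun_ne_top {a : ℝ} (ha : 0 < a) (l : ℝ≥0∞) : (ENNReal.ofReal a + l ^ 2)⁻¹ ≠ ∞ := by
  rw [ENNReal.inv_ne_top]; exact inner_ne_zero ha l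

lemma continuous_gfun {a : ℝ} (ha : 0 < a) : Continuous (gfun a) := by
  have h1 : Continuous fun l : ℝ≥0∞ => (ENNReal.ofReal a + l ^ 2)⁻¹ :=
    (continuous_const.add (ENNReal.continuous_pow 2)).inv
  rw [continuous_iff_continuousAt]
  intro x
  exact (ENNReal.tendsto_toReal (gfun_ne_top ha x)).comp h1.continuousAt

lemma gfun_top (a : ℝ) : gfun a ∞ = 0 := by
  simp [gfun, ENNReal.top_pow]

lemma gfun_ne' {a : ℝ} (ha : 0 < a) {l : ℝ≥0∞} (hl : l ≠ ∞) :
    gfun a l = 1 / (a + l.toReal ^ 2) := by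
  have h2 : (0:ℝ) ≤ l.toReal ^ 2 := sq_nonneg _
  have : ENNReal.ofReal a + l ^ 2 = ENNReal.ofReal (a + l.toReal ^ 2) := by
    rw [ENNReal.ofReal_add ha.le h2, ENNReal.ofReal_pow ENNReal.toReal_nonneg,
      ENNReal.ofReal_toReal hl]
  rw [gfun, this, ENNReal.toReal_inv, ENNReal.toReal_ofReal (by positivity), one_div]

lemma gfun_pos_ne {a : ℝ} (ha : 0 < a) {l : ℝ≥0∞} (hl : l ≠ ∞) : 0 < gfun a l := by
  rw [gfun_ne' ha hl]; positivity

/-- the kernel as a continuous map (junk value `0` for `a ≤ 0`). -/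
noncomputable def G (a : ℝ) : C(ℝ≥0∞, ℝ) :=
  if ha : 0 < a then ⟨gfun a, continuous_gfun ha⟩ else 0

lemma G_apply {a : ℝ} (ha : 0 < a) (l : ℝ≥0∞) : G a l = gfun a l := by
  simp [G, ha]

/-- partial fractions -/
lemma G_mul_G {a b : ℝ} (ha : 0 < a) (hb : 0 < b) (hab : a ≠ b) :
    G a * G b = (b - a)⁻¹ • (G a - G b) := by
  ext l
  simp only [ContinuousMap.mul_apply, ContinuousMap.smul_apply, ContinuousMap.sub_apply,
    smul_eq_mul, G_apply ha, G_apply hb]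
  rcases eq_or_ne l ∞ with rfl | hl
  · simp [gfun_top]
  · rw [gfun_ne' ha hl, gfun_ne' hb hl]
    have h1 : a + l.toReal ^ 2 ≠ 0 := by positivity
    have h2 : b + l.toReal ^ 2 ≠ 0 := by positivity
    have h3 : b - a ≠ 0 := sub_ne_zero.mpr (Ne.symm hab)
    field_simp
    ring

/-- Lipschitz-type estimate -/
lemma norm_G_sub_G_le {a b : ℝ} (ha : 0 < a) (hab : a ≤ b) :
    ‖G b - G a‖ ≤ (b - a) / (a * a) := by
  have hb : 0 < b := lt_of_lt_of_le ha hab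
  have hnn : (0:ℝ) ≤ (b - a) / (a * a) := div_nonneg (by linarith) (by positivity)
  rw [ContinuousMap.norm_le _ hnn]
  intro l
  simp only [ContinuousMap.sub_apply, G_apply ha, G_apply hb, Real.norm_eq_abs]
  rcases eq_or_ne l ∞ with rfl | hl
  · simpa [gfun_top] using hnn
  · rw [gfun_ne' ha hl, gfun_ne' hb hl]
    set t := l.toReal ^ 2 with ht
    have h0 : (0:ℝ) ≤ t := sq_nonneg _
    have h1 : 0 < a + t := by positivity
    have h2 : 0 < b + t := by positivity
    have key : 1 / (a + t) - 1 / (b + t) = (b - a) / ((a+t)*(b+t)) := by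
      rw [div_sub_div _ _ h1.ne' h2.ne']
      ring_nf
    rw [abs_sub_comm, key, abs_of_nonneg (div_nonneg (by linarith) (by positivity))]
    exact div_le_div_of_nonneg_left (by linarith) (by positivity) (by nlinarith)

/-- index set -/
def I : Set ℝ := {a | 0 < a ∧ a ≠ 1}

/-- generating set -/
noncomputable def T : Set C(ℝ≥0∞, ℝ) := {1} ∪ (G '' I)

noncomputable def V : Submodule ℝ C(ℝ≥0∞, ℝ) := Submodule.span ℝ T

noncomputable def M : Submodule ℝ C(ℝ≥0∞, ℝ) := V.topologicalClosure

lemma V_le_M : V ≤ M := Submodule.le_topologicalClosure V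

lemma one_mem_M : (1 : C(ℝ≥0∞, ℝ)) ∈ M :=
  V_le_M (Submodule.subset_span (Or.inl rfl))

lemma G_mem_V {a : ℝ} (ha : a ∈ I) : G a ∈ V :=
  Submodule.subset_span (Or.inr ⟨a, ha, rfl⟩)

/-- squares of generators lie in the closure -/
lemma G_sq_mem_M {a : ℝ} (ha : a ∈ I) : G a * G a ∈ M := by
  obtain ⟨ha0, ha1⟩ := ha
  set c : ℝ := min a |1 - a| / 2 with hc
  have hc0 : 0 < c := by
    have : 0 < |1 - a| := abs_pos.mpr (sub_ne_zero.mpr (Ne.symm ha1))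
    positivity
  set b : ℕ → ℝ := fun n => a + c / (n + 1) with hb
  have hba : ∀ n, a < b n := fun n => by
    have : 0 < c / ((n:ℝ) + 1) := by positivity
    simp only [hb]; linarith
  have hbI : ∀ n, b n ∈ I := by
    intro n
    refine ⟨lt_trans ha0 (hba n), ?_⟩
    rcases lt_or_gt_of_ne ha1 with h | h
    · -- a < 1 : b n ≤ a + c ≤ a + (1-a)/2 < 1
      have h1 : c ≤ (1 - a) / 2 := by
        rw [hc]
        have : |1 - a| = 1 - a := abs_of_pos (by linarith)
        rw [this]
        exact div_le_div_of_nonneg_right (min_le_right _ _) (by norm_num)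
      have h2 : c / ((n:ℝ) + 1) ≤ c := by
        apply div_le_self hc0.le
        have : (0:ℝ) ≤ (n:ℝ) := Nat.cast_nonneg n
        linarith
      intro hbn
      rw [hb] at hbn; simp only at hbn
      nlinarith
    · exact ne_of_gt (lt_trans h (hba n))
  -- tendsto
  have htend : Tendsto (fun n => G (b n)) atTop (𝓝 (G a)) := by
    rw [tendsto_iff_norm_sub_tendsto_zero]
    have hbound : ∀ n : ℕ, ‖G (b n) - G a‖ ≤ (c / (a * a)) * (1 / (n + 1)) := by
      intro n
      have := norm_G_sub_G_le ha0 (hba n).le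
      calc ‖G (b n) - G a‖ ≤ (b n - a) / (a * a) := this
        _ = (c / (a * a)) * (1 / (n + 1)) := by
            rw [hb]; field_simp; ring
    have hlim : Tendsto (fun n : ℕ => (c / (a * a)) * (1 / ((n:ℝ) + 1))) atTop (𝓝 0) := by
      have := tendsto_one_div_add_atTop_nhds_zero_nat (𝕜 := ℝ)
      simpa using this.const_mul (c / (a * a))
    exact squeeze_zero (fun n => norm_nonneg _) hbound hlim
  have htend2 : Tendsto (fun n => G a * G (b n)) atTop (𝓝 (G a * G a)) :=
    tendsto_const_nhds.mul htend
  have hmem : ∀ n, G a * G (b n) ∈ V := by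
    intro n
    rw [G_mul_G ha0 (lt_trans ha0 (hba n)) (ne_of_lt (hba n))]
    exact Submodule.smul_mem _ _ (Submodule.sub_mem _ (G_mem_V ⟨ha0, ha1⟩) (G_mem_V (hbI n)))
  exact Submodule.isClosed_topologicalClosure V |>.mem_of_tendsto htend2
    (Eventually.of_forall fun n => V_le_M (hmem n))

lemma mul_mem_M_of_T {f g : C(ℝ≥0∞, ℝ)} (hf : f ∈ T) (hg : g ∈ T) : f * g ∈ M := by
  rcases hf with rfl | ⟨a, ha, rfl⟩
  · rw [one_mul]
    rcases hg with rfl | ⟨b, hb, rfl⟩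
    · exact one_mem_M
    · exact V_le_M (G_mem_V hb)
  · rcases hg with rfl | ⟨b, hb, rfl⟩
    · rw [mul_one]; exact V_le_M (G_mem_V ha)
    · rcases eq_or_ne a b with rfl | hab
      · exact G_sq_mem_M ha
      · rw [G_mul_G ha.1 hb.1 hab]
        exact V_le_M (Submodule.smul_mem _ _ (Submodule.sub_mem _ (G_mem_V ha) (G_mem_V hb)))

lemma mul_mem_M_of_V {f g : C(ℝ≥0∞, ℝ)} (hf : f ∈ V) (hg : g ∈ V) : f * g ∈ M := by
  induction hf using Submodule.span_induction generalizing g with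
  | mem x hx =>
      induction hg using Submodule.span_induction with
      | mem y hy => exact mul_mem_M_of_T hx hy
      | zero => rw [mul_zero]; exact M.zero_mem
      | add y z _ _ hy hz => rw [mul_add]; exact M.add_mem hy hz
      | smul c y _ hy => rw [mul_smul_comm]; exact M.smul_mem c hy
  | zero => rw [zero_mul]; exact M.zero_mem
  | add x y _ _ hx hy => rw [add_mul]; exact M.add_mem (hx hg) (hy hg)
  | smul c x _ hx => rw [smul_mul_assoc]; exact M.smul_mem c (hx hg)

lemma mul_mem_M {f g : C(ℝ≥0∞, ℝ)} (hf : f ∈ M) (hg : g ∈ M) : f * g ∈ M := by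
  have hmaps : Set.MapsTo (fun p : C(ℝ≥0∞, ℝ) × C(ℝ≥0∞, ℝ) => p.1 * p.2)
      ((V : Set C(ℝ≥0∞, ℝ)) ×ˢ (V : Set C(ℝ≥0∞, ℝ))) (M : Set C(ℝ≥0∞, ℝ)) :=
    fun p hp => mul_mem_M_of_V hp.1 hp.2
  have hcont : Continuous (fun p : C(ℝ≥0∞, ℝ) × C(ℝ≥0∞, ℝ) => p.1 * p.2) :=
    continuous_mul
  have h2 := hmaps.closure hcont
  rw [closure_prod_eq] at h2
  have hMc : closure (M : Set C(ℝ≥0∞, ℝ)) = (M : Set C(ℝ≥0∞, ℝ)) :=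
    (Submodule.isClosed_topologicalClosure V).closure_eq
  have hfc : f ∈ closure (V : Set C(ℝ≥0∞, ℝ)) := hf
  have hgc : g ∈ closure (V : Set C(ℝ≥0∞, ℝ)) := hg
  have := h2 (Set.mk_mem_prod hfc hgc)
  rwa [hMc] at this

/-- M as a subalgebra -/
noncomputable def A : Subalgebra ℝ C(ℝ≥0∞, ℝ) :=
  M.toSubalgebra one_mem_M fun _ _ => mul_mem_M

lemma gfun_injective : Function.Injective (gfun 2) := by
  intro x y hxy
  have h2 : (0:ℝ) < 2 := by norm_num
  have hx : (ENNReal.ofReal 2 + x ^ 2)⁻¹ ≠ ∞ := by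
    rw [ENNReal.inv_ne_top]; simp
  have hy : (ENNReal.ofReal 2 + y ^ 2)⁻¹ ≠ ∞ := by
    rw [ENNReal.inv_ne_top]; simp
  rw [gfun, gfun] at hxy
  have h3 : (ENNReal.ofReal 2 + x ^ 2)⁻¹ = (ENNReal.ofReal 2 + y ^ 2)⁻¹ :=
    (ENNReal.toReal_eq_toReal_iff' hx hy).mp hxy
  have h4 : ENNReal.ofReal 2 + x ^ 2 = ENNReal.ofReal 2 + y ^ 2 := by
    have := congrArg (·⁻¹) h3
    simpa using this
  have h5 : x ^ 2 = y ^ 2 := by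
    rwa [ENNReal.add_right_inj (by simp)] at h4
  by_contra hne
  rcases lt_or_gt_of_ne hne with h | h
  · exact absurd h5 (ne_of_lt (ENNReal.pow_lt_pow_left (by norm_num) h))
  · exact absurd h5.symm (ne_of_lt (ENNReal.pow_lt_pow_left (by norm_num) h))

lemma A_separates : A.SeparatesPoints := by
  intro x y hxy
  refine ⟨G 2, ⟨G 2, V_le_M (G_mem_V ⟨by norm_num, by norm_num⟩), rfl⟩, ?_⟩
  simp only [G_apply (by norm_num : (0:ℝ) < 2)]
  exact fun h => hxy (gfun_injective h)

lemma M_eq_top : M = ⊤ := by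
  have h1 : A.topologicalClosure = ⊤ :=
    ContinuousMap.subalgebra_topologicalClosure_eq_top_of_separatesPoints A A_separates
  have h2 : (A.topologicalClosure : Set C(ℝ≥0∞, ℝ)) = closure (A : Set C(ℝ≥0∞, ℝ)) :=
    rfl
  have hMc : closure (M : Set C(ℝ≥0∞, ℝ)) = (M : Set C(ℝ≥0∞, ℝ)) :=
    (Submodule.isClosed_topologicalClosure V).closure_eq
  have hA : (A : Set C(ℝ≥0∞, ℝ)) = (M : Set C(ℝ≥0∞, ℝ)) := rfl
  rw [Submodule.eq_top_iff']
  intro f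
  have : f ∈ (⊤ : Subalgebra ℝ C(ℝ≥0∞, ℝ)) := trivial
  rw [← h1] at this
  have : f ∈ closure (A : Set C(ℝ≥0∞, ℝ)) := this
  rw [hA, hMc] at this
  exact this

lemma integrable_CM (μ : Measure ℝ≥0∞) [IsFiniteMeasure μ] (f : C(ℝ≥0∞, ℝ)) :
    Integrable (fun x => f x) μ :=
  (BoundedContinuousFunction.mkOfCompact f).integrable μ

lemma continuous_integral_CM (μ : Measure ℝ≥0∞) [IsFiniteMeasure μ] :
    Continuous fun f : C(ℝ≥0∞, ℝ) => ∫ x, f x ∂μ := by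
  have hm : (0:ℝ) ≤ (μ Set.univ).toReal := ENNReal.toReal_nonneg
  refine (LipschitzWith.of_dist_le_mul (K := (μ Set.univ).toNNReal) ?_).continuous
  intro f g
  rw [Real.dist_eq, dist_eq_norm, ← abs_norm (f - g)]
  have h1 : ∫ x, f x ∂μ - ∫ x, g x ∂μ = ∫ x, (f x - g x) ∂μ :=
    (integral_sub (integrable_CM μ f) (integrable_CM μ g)).symm
  rw [h1]
  have h2 : ∀ᵐ x ∂μ, ‖f x - g x‖ ≤ ‖f - g‖ := by
    filter_upwards with x
    exact (ContinuousMap.norm_coe_le_norm (f - g) x)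
  calc |∫ x, (f x - g x) ∂μ| ≤ ‖f - g‖ * (μ Set.univ).toReal :=
        norm_integral_le_of_norm_le_const h2
    _ = ((μ Set.univ).toNNReal : ℝ) * |‖f - g‖| := by
        rw [abs_norm, ENNReal.coe_toNNReal_eq_toReal, mul_comm]

/-- the integrand of `Psi` decomposes -/
lemma integrand_eq {p : ℝ} (hp : p ≠ 0) :
    (fun l : ℝ≥0∞ => if l = ∞ then 1 else (1 + l.toReal ^ 2) / (p ^ 2 + l.toReal ^ 2)) =
      fun l => 1 + (1 - p ^ 2) * G (p ^ 2) l := by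
  have hp2 : 0 < p ^ 2 := by positivity
  funext l
  rcases eq_or_ne l ∞ with rfl | hl
  · simp [G_apply hp2, gfun_top]
  · rw [if_neg hl, G_apply hp2, gfun_ne' hp2 hl]
    have h1 : p ^ 2 + l.toReal ^ 2 ≠ 0 := by positivity
    field_simp
    ring

lemma psi_integral_eq (μ : Measure ℝ≥0∞) [IsFiniteMeasure μ] {p : ℝ} (hp : p ≠ 0) :
    ∫ l, (if l = ∞ then 1 else (1 + l.toReal ^ 2) / (p ^ 2 + l.toReal ^ 2)) ∂μ =
      (μ Set.univ).toReal + (1 - p ^ 2) * ∫ l, G (p ^ 2) l ∂μ := by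
  rw [integrand_eq hp]
  rw [integral_add (integrable_const 1) ((integrable_CM μ (G (p ^ 2))).const_mul _)]
  rw [integral_const, integral_const_mul]
  simp [measureReal_def]

end PsiAux

/-- **Injectivity of `ν ↦ Ψ_ν`.**  For finite Borel measures `ν, ν'` on `[0,∞]`,
one has `Ψ_ν(p) = Ψ_{ν'}(p)` for all `p ∈ ℝ ∖ {0}` if and only if `ν = ν'`. -/
theorem Psi_inj (ν ν' : Measure ℝ≥0∞) [IsFiniteMeasure ν] [IsFiniteMeasure ν'] :
    (∀ p : ℝ, p ≠ 0 → Psi ν p = Psi ν' p) ↔ ν = ν' := by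
  constructor
  · intro h
    open PsiAux in
    -- step 0: remove the 1/π factor
    have hπ : (1 / Real.pi : ℝ) ≠ 0 := one_div_ne_zero Real.pi_ne_zero
    have hint : ∀ p : ℝ, p ≠ 0 →
        ∫ l, (if l = ∞ then 1 else (1 + l.toReal ^ 2) / (p ^ 2 + l.toReal ^ 2)) ∂ν =
        ∫ l, (if l = ∞ then 1 else (1 + l.toReal ^ 2) / (p ^ 2 + l.toReal ^ 2)) ∂ν' := by
      intro p hp
      have := h p hp
      unfold Psi at this
      exact mul_left_cancel₀ hπ this
    -- step 1: total masses agree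
    have hmass : (ν Set.univ).toReal = (ν' Set.univ).toReal := by
      have h1 := hint 1 one_ne_zero
      rw [psi_integral_eq ν one_ne_zero, psi_integral_eq ν' one_ne_zero] at h1
      simpa using h1
    -- step 2: integrals of G a agree for a ∈ I
    have hG : ∀ a ∈ I, ∫ x, G a x ∂ν = ∫ x, G a x ∂ν' := by
      rintro a ⟨ha0, ha1⟩
      have hsq : Real.sqrt a ^ 2 = a := Real.sq_sqrt ha0.le
      have hs0 : Real.sqrt a ≠ 0 := by positivity
      have h1 := hint (Real.sqrt a) hs0
      rw [psi_integral_eq ν hs0, psi_integral_eq ν' hs0, hsq, hmass] at h1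
      have h2 : (1 - a) ≠ 0 := sub_ne_zero.mpr (Ne.symm ha1)
      have := add_left_cancel h1
      exact mul_left_cancel₀ h2 this
    -- step 3: the set of functions with equal integrals is a closed submodule
    let S : Submodule ℝ C(ℝ≥0∞, ℝ) :=
      { carrier := {f | ∫ x, f x ∂ν = ∫ x, f x ∂ν'}
        add_mem' := by
          intro f g hf hg
          simp only [Set.mem_setOf_eq, ContinuousMap.add_apply]
          rw [integral_add (integrable_CM ν f) (integrable_CM ν g),
            integral_add (integrable_CM ν' f) (integrable_CM ν' g)]
          exact congrArg₂ (· + ·) hf hg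
        zero_mem' := by simp
        smul_mem' := by
          intro c f hf
          simp only [Set.mem_setOf_eq, ContinuousMap.smul_apply, smul_eq_mul]
          rw [integral_const_mul, integral_const_mul]
          exact congrArg (c * ·) hf }
    have hSclosed : IsClosed (S : Set C(ℝ≥0∞, ℝ)) :=
      isClosed_eq (continuous_integral_CM ν) (continuous_integral_CM ν')
    have hTS : T ⊆ (S : Set C(ℝ≥0∞, ℝ)) := by
      rintro f (rfl | ⟨a, ha, rfl⟩)
      · show (∫ x, (1 : C(ℝ≥0∞, ℝ)) x ∂ν) = _
        simp only [ContinuousMap.one_apply]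
        rw [integral_const, integral_const]
        simp [measureReal_def, hmass]
      · exact hG a ha
    have hVS : V ≤ S := Submodule.span_le.mpr hTS
    have hMS : M ≤ S := V.topologicalClosure_minimal hVS hSclosed
    have hall : ∀ f : C(ℝ≥0∞, ℝ), ∫ x, f x ∂ν = ∫ x, f x ∂ν' := by
      intro f
      exact hMS (by rw [M_eq_top]; trivial)
    -- step 4: conclude equality of measures
    apply MeasureTheory.ext_of_forall_lintegral_eq_of_IsFiniteMeasure
    intro f
    have hc : Continuous fun x => (f x : ℝ) := NNReal.continuous_coe.comp f.continuous
    have h1 : ∫⁻ x, (f x : ℝ≥0∞) ∂ν = ENNReal.ofReal (∫ x, (f x : ℝ) ∂ν) :=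
      lintegral_coe_eq_integral _ (integrable_CM ν ⟨fun x => (f x : ℝ), hc⟩)
    have h2 : ∫⁻ x, (f x : ℝ≥0∞) ∂ν' = ENNReal.ofReal (∫ x, (f x : ℝ) ∂ν') :=
      lintegral_coe_eq_integral _ (integrable_CM ν' ⟨fun x => (f x : ℝ), hc⟩)
    rw [h1, h2]
    exact congrArg ENNReal.ofReal (hall ⟨fun x => (f x : ℝ), hc⟩)
  · rintro rfl
    exact fun p _ => rfl
end

section
/- Let μ be a finite Borel measure on (0,∞). Then ψ_μ belongs to L¹(ℝ,ℂ) with ‖ψ_μ‖₁ = μ((0,∞)), and its Fourier transform equals φ_μ: for every t ∈ ℝ, ∫_ℝ e^{−itp} ψ_μ(p) dp = φ_μ(t) = ∫_{(0,∞)} e^{−λ|t|} dμ(λ). -/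
open MeasureTheory

/-- For a finite Borel measure `μ` on `(0,∞)` (a finite measure on `ℝ` giving no mass to
`(-∞,0]`), `ψ_μ(p) = (1/π) ∫ λ/(λ²+p²) dμ(λ)`. -/
noncomputable def psiFn (μ : Measure ℝ) (p : ℝ) : ℝ :=
  (1 / Real.pi) * ∫ l, l / (l ^ 2 + p ^ 2) ∂μ

open Set Real Filter FourierTransform

lemma intCexp {c : ℂ} (hc : 0 < c.re) :
    ∫ t in Set.Ioi (0:ℝ), Complex.exp (-(c * t)) = 1 / c := by
  have hint : IntegrableOn (fun t : ℝ => Complex.exp (-(c * t))) (Set.Ioi 0) := by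
    have h1 : IntegrableOn (fun t : ℝ => Real.exp (-c.re * t)) (Set.Ioi 0) :=
      exp_neg_integrableOn_Ioi 0 hc
    refine (h1.integrable.mono' ?_ ?_)
    · exact (Complex.continuous_exp.comp (by fun_prop)).aestronglyMeasurable
    · filter_upwards with t
      simp [Complex.norm_exp, mul_comm]
  have h1 : Tendsto (fun T : ℝ => ∫ t in (0:ℝ)..T, Complex.exp (-(c * t)))
      atTop (nhds (∫ t in Set.Ioi (0:ℝ), Complex.exp (-(c * t)))) :=
    intervalIntegral_tendsto_integral_Ioi 0 hint tendsto_id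
  have h2 : Tendsto (fun T : ℝ => ∫ t in (0:ℝ)..T, Complex.exp (-(c * t)))
      atTop (nhds (1 / c)) := by
    have hc0 : c ≠ 0 := fun h => by simp [h] at hc
    have heq : ∀ T : ℝ, (∫ t in (0:ℝ)..T, Complex.exp (-(c * t)))
        = (Complex.exp (-c * T) - 1) / (-c) := by
      intro T
      have := integral_exp_mul_complex (c := -c) (a := 0) (b := T) (by simpa using hc0)
      simpa [neg_mul] using this
    simp_rw [heq]
    have : Tendsto (fun T : ℝ => Complex.exp (-c * T)) atTop (nhds 0) := by
      rw [tendsto_zero_iff_norm_tendsto_zero]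
      have : ∀ T : ℝ, ‖Complex.exp (-c * T)‖ = Real.exp (-c.re * T) := by
        intro T; simp [Complex.norm_exp]
      simp_rw [this]
      exact Real.tendsto_exp_atBot.comp (tendsto_id.const_mul_atTop_of_neg (neg_neg_iff_pos.mpr hc) |>.mono_right le_rfl)
    have := (this.sub_const 1).div_const (-c)
    simpa [zero_sub, neg_div, div_neg] using this
  exact tendsto_nhds_unique h1 h2

lemma kernel_eq {l : ℝ} (hl : 0 < l) (p : ℝ) :
    l / (l ^ 2 + p ^ 2) = l⁻¹ * (1 + (p / l) ^ 2)⁻¹ := by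
  field_simp

lemma kernel_integrable {l : ℝ} (hl : 0 < l) :
    Integrable (fun p : ℝ => l / (l ^ 2 + p ^ 2)) := by
  have := (integrable_inv_one_add_sq.comp_div hl.ne').const_mul l⁻¹
  refine this.congr ?_
  filter_upwards with p
  exact (kernel_eq hl p).symm

lemma kernel_integral {l : ℝ} (hl : 0 < l) :
    ∫ p : ℝ, l / (l ^ 2 + p ^ 2) = Real.pi := by
  simp_rw [kernel_eq hl]
  rw [integral_const_mul, MeasureTheory.Measure.integral_comp_div (fun y : ℝ => (1 + y ^ 2)⁻¹) l,
    integral_univ_inv_one_add_sq]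
  simp [abs_of_pos hl, smul_eq_mul]
  field_simp

lemma g_integrable {l : ℝ} (hl : 0 < l) :
    Integrable (fun t : ℝ => Real.exp (-(l * |t|))) := by
  have A : MeasurableEmbedding (fun x : ℝ => -x) :=
    (Homeomorph.neg ℝ).isClosedEmbedding.measurableEmbedding
  have hIoi : IntegrableOn (fun t : ℝ => Real.exp (-(l * |t|))) (Ioi 0) := by
    refine (exp_neg_integrableOn_Ioi 0 hl).congr_fun ?_ measurableSet_Ioi
    intro t ht
    simp [abs_of_pos (mem_Ioi.mp ht), neg_mul]
  have hIci : IntegrableOn (fun t : ℝ => Real.exp (-(l * |t|))) (Ici 0) := by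
    rw [integrableOn_Ici_iff_integrableOn_Ioi]; exact hIoi
  have hIic : IntegrableOn (fun t : ℝ => Real.exp (-(l * |t|))) (Iic 0) := by
    have h1 : (volume : Measure ℝ).restrict (Iic (0:ℝ))
        = Measure.map (fun x : ℝ => -x) ((volume : Measure ℝ).restrict (Ici 0)) := by
      rw [← Measure.map_neg_eq_self (volume : Measure ℝ)]
      rw [Measure.restrict_map A.measurable measurableSet_Iic]
      congr 1
      ext x
      simp
    rw [IntegrableOn, h1, A.integrable_map_iff]
    refine hIci.congr_fun ?_ measurableSet_Ici
    intro x _; simp [Function.comp]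
  have := hIic.union hIoi
  rwa [Iic_union_Ioi, integrableOn_univ] at this

lemma fourier_g {l : ℝ} (hl : 0 < l) (ξ : ℝ) :
    𝓕 (fun t : ℝ => (Real.exp (-(l * |t|)) : ℂ)) ξ
      = ((2 * l / (l ^ 2 + (2 * π * ξ) ^ 2) : ℝ) : ℂ) := by
  rw [Real.fourier_real_eq_integral_exp_smul]
  have hgi := (g_integrable hl).ofReal (𝕜 := ℂ)
  have hInt : Integrable (fun v : ℝ =>
      Complex.exp (↑(-2 * π * v * ξ) * Complex.I) • ((Real.exp (-(l * |v|)) : ℝ) : ℂ)) := by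
    refine (g_integrable hl).mono' ?_ ?_
    · refine AEStronglyMeasurable.smul (f := fun v : ℝ => Complex.exp (↑(-2 * π * v * ξ) * Complex.I)) (g := fun v : ℝ => ((Real.exp (-(l * |v|)) : ℝ) : ℂ)) ?_ ?_
      · exact (Complex.continuous_exp.comp (by fun_prop)).aestronglyMeasurable
      · exact hgi.1
    · filter_upwards with v
      simp [Complex.norm_exp, norm_smul]
  rw [← intervalIntegral.integral_Iic_add_Ioi (hInt.integrableOn) (hInt.integrableOn)]
  have h1 : (∫ v in Iic (0:ℝ), Complex.exp (↑(-2 * π * v * ξ) * Complex.I)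
      • ((Real.exp (-(l * |v|)) : ℝ) : ℂ)) = 1 / ((l : ℂ) - (2 * π * ξ) * Complex.I) := by
    have hxx : (∫ v in Iic (0:ℝ), Complex.exp (↑(-2 * π * v * ξ) * Complex.I)
        • ((Real.exp (-(l * |v|)) : ℝ) : ℂ))
        = ∫ v in Iic (0:ℝ), (fun x : ℝ => Complex.exp (↑(2 * π * x * ξ) * Complex.I)
          • ((Real.exp (-(l * |x|)) : ℝ) : ℂ)) (-v) := by
      apply setIntegral_congr_fun measurableSet_Iic
      intro v _
      dsimp only
      rw [abs_neg]
      congr 3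
      push_cast
      ring
    have hneg := _root_.integral_comp_neg_Iic (0:ℝ) (fun x : ℝ =>
      Complex.exp (↑(2 * π * x * ξ) * Complex.I) • ((Real.exp (-(l * |x|)) : ℝ) : ℂ))
    rw [hxx, hneg, neg_zero]
    rw [setIntegral_congr_fun measurableSet_Ioi (g := fun x : ℝ =>
        Complex.exp (-((((l : ℂ) - (2 * π * ξ) * Complex.I)) * x)))]
    · exact intCexp (by simp [hl])
    · intro x hx
      dsimp only
      rw [abs_of_pos (mem_Ioi.mp hx)]
      rw [smul_eq_mul, Complex.ofReal_exp, ← Complex.exp_add]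
      congr 1
      push_cast
      ring
  have h2 : (∫ v in Ioi (0:ℝ), Complex.exp (↑(-2 * π * v * ξ) * Complex.I)
      • ((Real.exp (-(l * |v|)) : ℝ) : ℂ)) = 1 / ((l : ℂ) + (2 * π * ξ) * Complex.I) := by
    rw [setIntegral_congr_fun measurableSet_Ioi (g := fun x : ℝ =>
        Complex.exp (-((((l : ℂ) + (2 * π * ξ) * Complex.I)) * x)))]
    · exact intCexp (by simp [hl])
    · intro x hx
      dsimp only
      rw [abs_of_pos (mem_Ioi.mp hx)]
      rw [smul_eq_mul, Complex.ofReal_exp, ← Complex.exp_add]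
      congr 1
      push_cast
      ring
  rw [h1, h2]
  have hd1 : (l : ℂ) - (2 * π * ξ) * Complex.I ≠ 0 := by
    intro h
    have := congrArg Complex.re h
    simp at this
    exact hl.ne' this
  have hd2 : (l : ℂ) + (2 * π * ξ) * Complex.I ≠ 0 := by
    intro h
    have := congrArg Complex.re h
    simp at this
    exact hl.ne' this
  have hd3 : ((l : ℂ) ^ 2 + ((2 * π * ξ) : ℝ) ^ 2 : ℂ) ≠ 0 := by
    have : ((l : ℝ) ^ 2 + (2 * π * ξ) ^ 2) ≠ 0 := by positivity
    exact_mod_cast fun h => this (by exact_mod_cast h)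
  push_cast
  rw [div_add_div _ _ hd1 hd2, eq_div_iff (by exact_mod_cast hd3 : ((l:ℂ)^2 + (2*π*ξ)^2 ≠ 0))]
  field_simp
  ring_nf
  simp [Complex.I_sq]

lemma poissonB {l : ℝ} (hl : 0 < l) (t : ℝ) :
    ∫ p : ℝ, Complex.exp (-(Complex.I * t * p)) * ((l / (l ^ 2 + p ^ 2) : ℝ) : ℂ)
      = (π : ℂ) * Real.exp (-(l * |t|)) := by
  set g : ℝ → ℂ := fun t : ℝ => (Real.exp (-(l * |t|)) : ℂ) with hg
  have hgi : Integrable g := (g_integrable hl).ofReal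
  have hgc : Continuous g :=
    Complex.continuous_ofReal.comp (Real.continuous_exp.comp (by fun_prop))
  have h𝓕 : 𝓕 g = fun ξ : ℝ => ((2 * l / (l ^ 2 + (2 * π * ξ) ^ 2) : ℝ) : ℂ) :=
    funext (fourier_g hl)
  have h𝓕i : Integrable (𝓕 g) := by
    rw [h𝓕]
    apply Integrable.ofReal
    have : Integrable (fun ξ : ℝ => l / (l ^ 2 + (2 * π * ξ) ^ 2)) :=
      (kernel_integrable hl).comp_mul_left' (by positivity : (2*π:ℝ) ≠ 0)
    refine (this.const_mul 2).congr ?_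
    filter_upwards with ξ
    exact (mul_div_assoc 2 l _).symm
  have hinv := hgi.fourierInv_fourier_eq h𝓕i (hgc.continuousAt (x := -t))
  rw [Real.fourierInv_eq'] at hinv
  have hginv : g (-t) = g t := by simp [hg]
  rw [hginv] at hinv
  simp only [h𝓕] at hinv
  -- change of variables
  have hcv := MeasureTheory.Measure.integral_comp_mul_left (fun p : ℝ =>
      Complex.exp (-(Complex.I * t * p)) * ((2 * l / (l ^ 2 + p ^ 2) : ℝ) : ℂ)) (2 * π)
  have heq : (∫ v : ℝ, Complex.exp ((↑(2 * π * (inner ℝ v (-t) : ℝ)) : ℂ) * Complex.I)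
      • ((2 * l / (l ^ 2 + (2 * π * v) ^ 2) : ℝ) : ℂ))
      = ∫ x : ℝ, (fun p : ℝ => Complex.exp (-(Complex.I * t * p))
        * ((2 * l / (l ^ 2 + p ^ 2) : ℝ) : ℂ)) (2 * π * x) := by
    congr 1
    funext v
    dsimp only
    rw [smul_eq_mul]
    congr 2
    · push_cast [RCLike.inner_apply, starRingEnd_apply, star_trivial]
      ring
  rw [heq, hcv] at hinv
  have h2π : |(2 * π)⁻¹| = (2 * π)⁻¹ := abs_of_pos (by positivity)
  rw [h2π, Complex.real_smul] at hinv
  -- hinv : (2π)⁻¹ * ∫ p, cexp(-(I t p)) * (2l/(l²+p²)) = g t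
  have : (∫ p : ℝ, Complex.exp (-(Complex.I * t * p)) * ((2 * l / (l ^ 2 + p ^ 2) : ℝ) : ℂ))
      = 2 * π * g t := by
    rw [← hinv]
    push_cast
    rw [← mul_assoc, mul_inv_cancel₀ (by
      simp [Real.pi_ne_zero] : (2*(π:ℂ)) ≠ 0), one_mul]
  have hsplit : ∀ p : ℝ, Complex.exp (-(Complex.I * t * p)) * ((l / (l ^ 2 + p ^ 2) : ℝ) : ℂ)
      = (1/2 : ℂ) * (Complex.exp (-(Complex.I * t * p)) * ((2 * l / (l ^ 2 + p ^ 2) : ℝ) : ℂ)) := by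
    intro p
    push_cast
    ring
  simp_rw [hsplit]
  rw [integral_const_mul, this, hg]
  push_cast
  ring

lemma ofReal_int {α : Type*} [MeasurableSpace α] (ν : Measure α) (f : α → ℝ) :
    ((∫ x, f x ∂ν : ℝ) : ℂ) = ∫ x, ((f x : ℝ) : ℂ) ∂ν := by
  have := Complex.ofRealLI.integral_comp_comm (μ := ν) f
  simp only [Complex.ofRealLI, LinearIsometry.coe_mk] at this
  exact this.symm

/-- **`ψ_μ` is integrable with `‖ψ_μ‖₁ = μ((0,∞))` and Fourier transform `φ_μ`.**
Let `μ` be a finite Borel measure on `(0,∞)`.  Then `ψ_μ ∈ L¹(ℝ,ℂ)`,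
`∫ |ψ_μ(p)| dp = μ((0,∞))`, and for every `t ∈ ℝ`,
`∫ e^{-itp} ψ_μ(p) dp = φ_μ(t) = ∫ e^{-λ|t|} dμ(λ)`. -/
theorem psi_integrable_and_fourier (μ : Measure ℝ) [IsFiniteMeasure μ]
    (hsupp : μ {x : ℝ | x ≤ 0} = 0) :
    Integrable (psiFn μ) (volume : Measure ℝ) ∧
    (∫ p : ℝ, |psiFn μ p| = (μ (Set.Ioi (0:ℝ))).toReal) ∧
    ∀ t : ℝ, (∫ p : ℝ, Complex.exp (-(Complex.I * (t : ℂ) * (p : ℂ))) * (psiFn μ p : ℂ))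
      = ((∫ l : ℝ, Real.exp (-(l * |t|)) ∂μ : ℝ) : ℂ) := by
  have hpos : ∀ᵐ l ∂μ, 0 < l := by
    rw [ae_iff]
    convert hsupp using 2
    ext x
    simp [not_lt]
  have hFm : AEStronglyMeasurable (fun z : ℝ × ℝ => z.1 / (z.1 ^ 2 + z.2 ^ 2))
      (μ.prod volume) := by
    apply Measurable.aestronglyMeasurable
    fun_prop
  have hF : Integrable (fun z : ℝ × ℝ => z.1 / (z.1 ^ 2 + z.2 ^ 2)) (μ.prod volume) := by
    rw [integrable_prod_iff hFm]
    constructor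
    · filter_upwards [hpos] with l hl
      exact kernel_integrable hl
    · refine (integrable_const (π : ℝ)).congr ?_
      filter_upwards [hpos] with l hl
      have : ∀ p : ℝ, ‖l / (l ^ 2 + p ^ 2)‖ = l / (l ^ 2 + p ^ 2) := by
        intro p
        rw [Real.norm_eq_abs, abs_of_nonneg (div_nonneg hl.le (by positivity))]
      simp_rw [this]
      exact (kernel_integral hl).symm
  have hint1 : Integrable (fun p : ℝ => ∫ l, l / (l ^ 2 + p ^ 2) ∂μ) := by
    have := hF.integral_prod_right
    exact this
  have hIntPsi : Integrable (psiFn μ) := by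
    unfold psiFn
    exact hint1.const_mul _
  have hnn : ∀ p : ℝ, 0 ≤ psiFn μ p := by
    intro p
    unfold psiFn
    apply mul_nonneg (by positivity)
    apply integral_nonneg_of_ae
    filter_upwards [hpos] with l hl
    positivity
  have huniv : μ (Set.Ioi (0:ℝ)) = μ Set.univ := by
    refine le_antisymm (measure_mono (subset_univ _)) ?_
    have hcover : (Set.univ : Set ℝ) ⊆ Set.Ioi 0 ∪ {x : ℝ | x ≤ 0} := by
      intro x _
      rcases lt_or_ge 0 x with h | h
      · exact Or.inl h
      · exact Or.inr h
    calc μ Set.univ ≤ μ (Set.Ioi 0 ∪ {x : ℝ | x ≤ 0}) := measure_mono hcover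
      _ ≤ μ (Set.Ioi 0) + μ {x : ℝ | x ≤ 0} := measure_union_le _ _
      _ = μ (Set.Ioi 0) := by rw [hsupp, add_zero]
  have hswap : (∫ p : ℝ, ∫ l, l / (l ^ 2 + p ^ 2) ∂μ)
      = ∫ l, (∫ p : ℝ, l / (l ^ 2 + p ^ 2)) ∂μ := by
    have := integral_integral_swap (f := fun l p : ℝ => l / (l ^ 2 + p ^ 2))
      (μ := μ) (ν := volume) hF
    exact this.symm
  have hval : (∫ p : ℝ, psiFn μ p) = (μ (Set.Ioi (0:ℝ))).toReal := by
    unfold psiFn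
    rw [integral_const_mul, hswap]
    rw [integral_congr_ae (g := fun _ => (π : ℝ)) (by
      filter_upwards [hpos] with l hl
      exact kernel_integral hl)]
    rw [integral_const, huniv]
    simp [smul_eq_mul]
    field_simp
    rfl
  refine ⟨hIntPsi, ?_, ?_⟩
  · rw [← hval]
    apply integral_congr_ae
    filter_upwards with p
    exact abs_of_nonneg (hnn p)
  · intro t
    set G : ℝ × ℝ → ℂ := fun z =>
      Complex.exp (-(Complex.I * t * z.2)) * ((z.1 / (z.1 ^ 2 + z.2 ^ 2) : ℝ) : ℂ) with hGdef
    have hGm : AEStronglyMeasurable G (μ.prod volume) := by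
      apply Measurable.aestronglyMeasurable
      apply Measurable.mul
      · exact (Complex.measurable_exp.comp (by fun_prop))
      · fun_prop
    have hnormG : ∀ z : ℝ × ℝ, ‖G z‖ = ‖z.1 / (z.1 ^ 2 + z.2 ^ 2)‖ := by
      intro z
      rw [hGdef]
      simp only [norm_mul, Complex.norm_exp, Complex.norm_real]
      have : (-(Complex.I * t * z.2)).re = 0 := by simp
      rw [this, Real.exp_zero, one_mul, Real.norm_eq_abs]
    have hG : Integrable G (μ.prod volume) := by
      refine hF.norm.mono' hGm ?_
      filter_upwards with z
      rw [hnormG]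
    have hGswap : (∫ p : ℝ, ∫ l, G (l, p) ∂μ) = ∫ l, (∫ p : ℝ, G (l, p)) ∂μ := by
      have := integral_integral_swap (f := fun l p : ℝ => G (l, p)) (μ := μ) (ν := volume) hG
      exact this.symm
    have hlhs : (∫ p : ℝ, Complex.exp (-(Complex.I * (t : ℂ) * (p : ℂ))) * (psiFn μ p : ℂ))
        = (1 / (π : ℂ)) * ∫ p : ℝ, ∫ l, G (l, p) ∂μ := by
      rw [← integral_const_mul]
      apply integral_congr_ae
      filter_upwards with p
      unfold psiFn
      rw [Complex.ofReal_mul, ofReal_int μ (fun l => l / (l ^ 2 + p ^ 2))]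
      rw [← integral_const_mul, ← integral_const_mul, ← integral_const_mul]
      apply integral_congr_ae
      filter_upwards with l
      rw [hGdef]
      push_cast
      ring
    have hinner : (∫ l, (∫ p : ℝ, G (l, p)) ∂μ)
        = ∫ l, ((π : ℂ) * (Real.exp (-(l * |t|)) : ℝ)) ∂μ := by
      apply integral_congr_ae
      filter_upwards [hpos] with l hl
      exact poissonB hl t
    rw [hlhs, hGswap, hinner, integral_const_mul]
    rw [← ofReal_int μ (fun l => Real.exp (-(l * |t|)))]
    rw [← mul_assoc]
    rw [one_div, inv_mul_cancel₀ (by exact_mod_cast Real.pi_ne_zero), one_mul]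
end

section
/- Let ν be a nonzero finite Borel measure on [0,∞]. Then ∫_ℝ |log(Ψ_ν(p))|/(1+p²) dp < ∞. -/
open MeasureTheory Set
open scoped ENNReal

/-- integrability of `|log (p^2)| / (1+p^2)` over ℝ. -/
lemma aux_integrable_log_sq :
    Integrable (fun p : ℝ => |Real.log (p ^ 2)| / (1 + p ^ 2)) := by
  set G : ℝ → ℝ := fun p => |Real.log (p ^ 2)| / (1 + p ^ 2) with hG
  have hGmeas : Measurable G := by
    exact ((Real.measurable_log.comp (measurable_id.pow_const 2)).abs).div
      (measurable_const.add (measurable_id.pow_const 2))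
  have key1 : ∀ p : ℝ, 1 < p → |Real.log (p ^ 2)| / (1 + p ^ 2) ≤ 4 * p ^ (-(3:ℝ)/2) := by
    intro p hp
    have hp0 : (0:ℝ) < p := by linarith
    have hlog : Real.log (p ^ 2) = 2 * Real.log p := by
      rw [← Real.rpow_natCast p 2, Real.log_rpow hp0]; norm_num
    have hlognn : (0:ℝ) ≤ Real.log p := Real.log_nonneg hp.le
    have hsq : Real.log p = 2 * Real.log (p ^ ((1:ℝ)/2)) := by
      rw [Real.log_rpow hp0]; ring
    have h1 : Real.log (p ^ ((1:ℝ)/2)) ≤ p ^ ((1:ℝ)/2) :=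
      (Real.log_le_sub_one_of_pos (Real.rpow_pos_of_pos hp0 _)).trans (by linarith)
    have h2 : |Real.log (p ^ 2)| ≤ 4 * p ^ ((1:ℝ)/2) := by
      rw [hlog, abs_of_nonneg (by linarith)]
      nlinarith [Real.rpow_pos_of_pos hp0 ((1:ℝ)/2)]
    have hd : p ^ (2:ℕ) ≤ 1 + p ^ 2 := by nlinarith
    have hple : |Real.log (p ^ 2)| / (1 + p ^ 2) ≤ 4 * p ^ ((1:ℝ)/2) / p ^ (2:ℕ) :=
      div_le_div₀ (by positivity) h2 (by positivity) hd
    refine hple.trans_eq ?_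
    rw [← Real.rpow_natCast p 2, mul_div_assoc, ← Real.rpow_sub hp0]
    norm_num
  have key2 : ∀ p : ℝ, 0 < p → p < 1 → |Real.log (p ^ 2)| / (1 + p ^ 2) ≤ 4 * p ^ (-(1:ℝ)/2) := by
    intro p hp0 hp1
    have hlog : Real.log (p ^ 2) = 2 * Real.log p := by
      rw [← Real.rpow_natCast p 2, Real.log_rpow hp0]; norm_num
    have hlognp : Real.log p ≤ 0 := Real.log_nonpos hp0.le hp1.le
    have hinv : -Real.log p = 2 * Real.log ((p⁻¹) ^ ((1:ℝ)/2)) := by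
      rw [Real.log_rpow (by positivity), Real.log_inv]; ring
    have h1 : Real.log ((p⁻¹) ^ ((1:ℝ)/2)) ≤ (p⁻¹) ^ ((1:ℝ)/2) :=
      (Real.log_le_sub_one_of_pos (Real.rpow_pos_of_pos (by positivity) _)).trans (by linarith)
    have hinvrw : (p⁻¹) ^ ((1:ℝ)/2) = p ^ (-(1:ℝ)/2) := by
      rw [← Real.rpow_neg_one p, ← Real.rpow_mul hp0.le]
      norm_num
    have h2 : |Real.log (p ^ 2)| ≤ 4 * p ^ (-(1:ℝ)/2) := by
      rw [hlog, abs_of_nonpos (by linarith)]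
      rw [hinvrw] at h1 hinv
      linarith
    have hd1 : (1:ℝ) ≤ 1 + p ^ 2 := by nlinarith
    calc |Real.log (p ^ 2)| / (1 + p ^ 2) ≤ |Real.log (p ^ 2)| / 1 :=
          div_le_div_of_nonneg_left (abs_nonneg _) one_pos hd1
      _ = |Real.log (p ^ 2)| := div_one _
      _ ≤ 4 * p ^ (-(1:ℝ)/2) := h2
  -- Integrable on Ioi 1
  have hIoi1 : IntegrableOn G (Ioi 1) := by
    refine ((integrableOn_Ioi_rpow_of_lt (by norm_num : (-(3:ℝ)/2) < -1) one_pos).const_mul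
      4).mono' hGmeas.aestronglyMeasurable.restrict ?_
    refine (ae_restrict_iff' measurableSet_Ioi).2 (ae_of_all _ fun x hx => ?_)
    have hx1 : (1:ℝ) < x := hx
    rw [Real.norm_eq_abs, abs_of_nonneg (by positivity)]
    exact key1 x hx1
  have hIci1 : IntegrableOn G (Ici 1) :=
    (integrableOn_Ici_iff_integrableOn_Ioi).2 hIoi1
  -- Integrable on Ioo 0 1
  have hIoo : IntegrableOn G (Ioo 0 1) := by
    refine (((intervalIntegral.integrableOn_Ioo_rpow_iff one_pos).2 (by norm_num : (-1:ℝ) < -1/2)).const_mul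
      4).mono' hGmeas.aestronglyMeasurable.restrict ?_
    · refine (ae_restrict_iff' measurableSet_Ioo).2 (ae_of_all _ fun x hx => ?_)
      rw [Real.norm_eq_abs, abs_of_nonneg (by positivity)]
      exact key2 x hx.1 hx.2
  have hIoi0 : IntegrableOn G (Ioi 0) := by
    rw [← Set.Ioo_union_Ici_eq_Ioi (by norm_num : (0:ℝ) < 1)]
    exact hIoo.union hIci1
  have hIci0 : IntegrableOn G (Ici 0) :=
    (integrableOn_Ici_iff_integrableOn_Ioi).2 hIoi0
  -- negative side by symmetry
  have heven : ∀ x : ℝ, G (-x) = G x := by intro x; simp [hG]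
  have hIio0 : IntegrableOn G (Iio 0) := by
    have h1 : Integrable ((Ici (0:ℝ)).indicator G) :=
      (integrable_indicator_iff measurableSet_Ici).2 hIci0
    have h2 : Integrable (fun x => (Ici (0:ℝ)).indicator G (-x)) := h1.comp_neg
    have h3 : (fun x => (Ici (0:ℝ)).indicator G (-x)) = (Iic (0:ℝ)).indicator G := by
      funext x
      simp only [Set.indicator_apply, Set.mem_Ici, Set.mem_Iic, heven, neg_nonneg]
    rw [h3] at h2
    exact ((integrable_indicator_iff measurableSet_Iic).1 h2).mono_set Iio_subset_Iic_self
  have : IntegrableOn G (Iio 0 ∪ Ici 0) := hIio0.union hIci0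
  rw [Set.Iio_union_Ici] at this
  exact integrableOn_univ.1 this

lemma Psi_log_bound (ν : Measure ℝ≥0∞) [IsFiniteMeasure ν] (hν : ν ≠ 0) {p : ℝ} (hp : p ≠ 0) :
    |Real.log (Psi ν p)| ≤ |Real.log ((ν Set.univ).toReal / Real.pi)| + |Real.log (p ^ 2)| := by
  set c : ℝ := (ν Set.univ).toReal / Real.pi with hc
  have hν0 : ν Set.univ ≠ 0 := by
    simpa [Measure.measure_univ_eq_zero] using hν
  have hνtop : ν Set.univ ≠ ⊤ := measure_ne_top ν _
  have hcpos : 0 < c := div_pos (ENNReal.toReal_pos hν0 hνtop) Real.pi_pos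
  set u : ℝ := Real.exp |Real.log (p ^ 2)| with hu
  have hupos : 0 < u := Real.exp_pos _
  have hu1 : 1 ≤ u := Real.one_le_exp (abs_nonneg _)
  have hp2 : (0:ℝ) < p ^ 2 := by positivity
  have hup : p ^ 2 ≤ u := by
    calc p ^ 2 = Real.exp (Real.log (p ^ 2)) := (Real.exp_log hp2).symm
      _ ≤ u := Real.exp_le_exp.2 (le_abs_self _)
  have huinv : (p ^ 2)⁻¹ ≤ u := by
    calc (p ^ 2)⁻¹ = Real.exp (Real.log ((p ^ 2)⁻¹)) :=
          (Real.exp_log (by positivity)).symm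
      _ ≤ u := by
          rw [Real.log_inv]
          exact Real.exp_le_exp.2 (neg_le_abs _)
  have hup2 : 1 ≤ u * p ^ 2 := by
    rw [← inv_mul_cancel₀ hp2.ne']
    exact mul_le_mul_of_nonneg_right huinv hp2.le
  set f : ℝ≥0∞ → ℝ := fun l =>
    if l = ∞ then 1 else (1 + l.toReal ^ 2) / (p ^ 2 + l.toReal ^ 2) with hf
  have hfmeas : Measurable f := by
    refine Measurable.ite (measurableSet_singleton ∞) measurable_const ?_
    exact (measurable_const.add (ENNReal.measurable_toReal.pow_const 2)).div
      (measurable_const.add (ENNReal.measurable_toReal.pow_const 2))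
  have hfu : ∀ l, f l ≤ u := by
    intro l
    rw [hf]
    by_cases hl : l = ∞
    · simp [hl, hu1]
    · simp only [hl, if_false]
      set t : ℝ := l.toReal
      have ht : 0 ≤ t ^ 2 := sq_nonneg t
      rw [div_le_iff₀ (by positivity)]
      nlinarith
  have hfl : ∀ l, u⁻¹ ≤ f l := by
    intro l
    rw [hf]
    by_cases hl : l = ∞
    · simpa [hl] using inv_le_one_of_one_le₀ hu1
    · simp only [hl, if_false]
      set t : ℝ := l.toReal
      have ht : 0 ≤ t ^ 2 := sq_nonneg t
      rw [le_div_iff₀ (by positivity)]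
      have h1 : u⁻¹ * p ^ 2 ≤ 1 := by
        rw [← inv_mul_cancel₀ hupos.ne']
        exact mul_le_mul_of_nonneg_left hup (inv_nonneg.2 hupos.le)
      have h2 : u⁻¹ ≤ 1 := inv_le_one_of_one_le₀ hu1
      nlinarith
  have hfint : Integrable f ν := by
    refine (integrable_const u).mono' hfmeas.aestronglyMeasurable (ae_of_all _ fun l => ?_)
    rw [Real.norm_eq_abs, abs_of_nonneg ((inv_nonneg.2 hupos.le).trans (hfl l))]
    exact hfu l
  have hub : ∫ l, f l ∂ν ≤ (ν Set.univ).toReal * u := by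
    calc ∫ l, f l ∂ν ≤ ∫ _, u ∂ν := integral_mono hfint (integrable_const u) hfu
      _ = (ν Set.univ).toReal * u := by rw [integral_const]; simp [smul_eq_mul, Measure.real]
  have hlb : (ν Set.univ).toReal * u⁻¹ ≤ ∫ l, f l ∂ν := by
    calc (ν Set.univ).toReal * u⁻¹ = ∫ _, u⁻¹ ∂ν := by rw [integral_const]; simp [smul_eq_mul, Measure.real]
      _ ≤ ∫ l, f l ∂ν := integral_mono (integrable_const _) hfint hfl
  have hPsiub : Psi ν p ≤ c * u := by
    rw [Psi, hc]
    have := mul_le_mul_of_nonneg_left hub (by positivity : (0:ℝ) ≤ 1 / Real.pi)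
    calc (1 / Real.pi) * ∫ l, f l ∂ν ≤ (1 / Real.pi) * ((ν Set.univ).toReal * u) := this
      _ = (ν Set.univ).toReal / Real.pi * u := by ring
  have hPsilb : c * u⁻¹ ≤ Psi ν p := by
    rw [Psi, hc]
    have := mul_le_mul_of_nonneg_left hlb (by positivity : (0:ℝ) ≤ 1 / Real.pi)
    calc (ν Set.univ).toReal / Real.pi * u⁻¹ = (1 / Real.pi) * ((ν Set.univ).toReal * u⁻¹) := by
          ring
      _ ≤ (1 / Real.pi) * ∫ l, f l ∂ν := this
  have hPsipos : 0 < Psi ν p := lt_of_lt_of_le (by positivity) hPsilb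
  have h1 : Real.log (Psi ν p) ≤ Real.log c + |Real.log (p ^ 2)| := by
    calc Real.log (Psi ν p) ≤ Real.log (c * u) := Real.log_le_log hPsipos hPsiub
      _ = Real.log c + |Real.log (p ^ 2)| := by
          rw [Real.log_mul hcpos.ne' hupos.ne', hu, Real.log_exp]
  have h2 : Real.log c - |Real.log (p ^ 2)| ≤ Real.log (Psi ν p) := by
    have := Real.log_le_log (by positivity) hPsilb
    calc Real.log c - |Real.log (p ^ 2)| = Real.log (c * u⁻¹) := by
          rw [Real.log_mul hcpos.ne' (by positivity), Real.log_inv, hu, Real.log_exp]; ring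
      _ ≤ Real.log (Psi ν p) := this
  have := abs_le.1 (le_refl |Real.log c|)
  have hca := le_abs_self (Real.log c)
  have hcb := neg_abs_le (Real.log c)
  rw [abs_le]
  constructor <;> [linarith; linarith]

/-- **Logarithmic integrability of `Ψ_ν`.**  For every nonzero finite Borel measure `ν`
on `[0,∞]` one has `∫_ℝ |log Ψ_ν(p)| / (1+p²) dp < ∞`. -/
theorem integral_abs_log_Psi_lt_top (ν : Measure ℝ≥0∞) [IsFiniteMeasure ν] (hν : ν ≠ 0) :
    ∫⁻ p : ℝ, ENNReal.ofReal (|Real.log (Psi ν p)| / (1 + p ^ 2)) < ⊤ := by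
  set A : ℝ := |Real.log ((ν Set.univ).toReal / Real.pi)| with hA
  have hg : Integrable (fun p : ℝ => (A + |Real.log (p ^ 2)|) / (1 + p ^ 2)) := by
    have h1 : Integrable (fun p : ℝ => A * (1 + p ^ 2)⁻¹) :=
      integrable_inv_one_add_sq.const_mul A
    have h2 := aux_integrable_log_sq
    have heq : (fun p : ℝ => (A + |Real.log (p ^ 2)|) / (1 + p ^ 2)) =
        fun p : ℝ => A * (1 + p ^ 2)⁻¹ + |Real.log (p ^ 2)| / (1 + p ^ 2) := by
      funext p
      rw [add_div]
      ring
    rw [heq]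
    exact h1.add h2
  have hae : ∀ᵐ p : ℝ, ENNReal.ofReal (|Real.log (Psi ν p)| / (1 + p ^ 2)) ≤
      ENNReal.ofReal ((A + |Real.log (p ^ 2)|) / (1 + p ^ 2)) := by
    have h0 : ∀ᵐ p : ℝ, p ≠ 0 := by
      rw [ae_iff]
      simp only [ne_eq, not_not]
      have : {p : ℝ | p = 0} = {0} := by ext; simp
      rw [this]
      exact measure_singleton 0
    filter_upwards [h0] with p hp
    refine ENNReal.ofReal_le_ofReal ?_
    gcongr
    exact Psi_log_bound ν hν hp
  calc ∫⁻ p : ℝ, ENNReal.ofReal (|Real.log (Psi ν p)| / (1 + p ^ 2))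
      ≤ ∫⁻ p : ℝ, ENNReal.ofReal ((A + |Real.log (p ^ 2)|) / (1 + p ^ 2)) :=
        lintegral_mono_ae hae
    _ < ⊤ := hg.lintegral_lt_top
end

section
/- For every finite Borel measure ν on [0,∞] there exists a sequence (μ_n) of finite Borel measures on (0,∞) such that (W(μ_n))([0,∞]) = ν([0,∞]) for every n, and W(μ_n) converges to ν in the weak-* topology, i.e. ∫_{[0,∞]} f d(W(μ_n)) → ∫_{[0,∞]} f dν for every continuous function f : [0,∞] → ℂ. -/
open MeasureTheory Filter Topology
open scoped ENNReal

/-- For a finite Borel measure `μ` on `(0,∞)` (a measure on `ℝ` giving no mass to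
`(-∞,0]`), `W(μ)` is the finite Borel measure on `[0,∞]` (modelled by `ℝ≥0∞`)
with `(W(μ))(A) = ∫_{A∩(0,∞)} λ/(1+λ²) dμ(λ)`. -/
noncomputable def Wmap (μ : Measure ℝ) : Measure ℝ≥0∞ :=
  Measure.map ENNReal.ofReal (μ.withDensity fun x => ENNReal.ofReal (x / (1 + x ^ 2)))

/-- **Approximation of measures on `[0,∞]` by measures in the range of `W`.**
For every finite Borel measure `ν` on `[0,∞]` there is a sequence `(μ_n)` of finite
Borel measures on `(0,∞)` with `(W(μ_n))([0,∞]) = ν([0,∞])` for all `n` and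
`W(μ_n) → ν` in the weak-* topology, i.e. `∫ f d(W(μ_n)) → ∫ f dν` for every
continuous `f : [0,∞] → ℂ`. -/
theorem Wmap_range_weakstar_dense (ν : Measure ℝ≥0∞) [IsFiniteMeasure ν] :
    ∃ μ : ℕ → Measure ℝ,
      (∀ n, IsFiniteMeasure (μ n)) ∧
      (∀ n, μ n {x : ℝ | x ≤ 0} = 0) ∧
      (∀ n, Wmap (μ n) Set.univ = ν Set.univ) ∧
      ∀ f : C(ℝ≥0∞, ℂ),
        Tendsto (fun n => ∫ x, f x ∂(Wmap (μ n))) atTop (𝓝 (∫ x, f x ∂ν)) := by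
  set m : ℕ → ℝ≥0∞ := fun n => ((n + 1 : ℕ) : ℝ≥0∞) with hm
  set c : ℕ → ℝ≥0∞ → ℝ≥0∞ := fun n x => min (max x (m n)⁻¹) (m n) with hc
  set g : ℕ → ℝ≥0∞ → ℝ := fun n x => (c n x).toReal with hg
  have hm1 : ∀ n, (1 : ℝ≥0∞) ≤ m n := fun n => by
    simp [hm]
  have hmlt : ∀ n, m n < ⊤ := fun n => by simp [hm]
  have hcle : ∀ n x, c n x ≤ m n := fun n x => min_le_right _ _
  have hcge : ∀ n x, (m n)⁻¹ ≤ c n x := fun n x =>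
    le_min (le_max_right _ _) ((ENNReal.inv_le_one.mpr (hm1 n)).trans (hm1 n))
  have hclt : ∀ n x, c n x < ⊤ := fun n x => lt_of_le_of_lt (hcle n x) (hmlt n)
  -- real bounds on g
  have hgub : ∀ n x, g n x ≤ (n + 1 : ℝ) := fun n x => by
    have := ENNReal.toReal_mono (hmlt n).ne (hcle n x)
    simpa [hg, hm, ENNReal.toReal_add] using this
  have hglb : ∀ (n : ℕ) (x : ℝ≥0∞), ((n : ℝ) + 1)⁻¹ ≤ g n x := fun n x => by
    have := ENNReal.toReal_mono (hclt n x).ne (hcge n x)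
    simpa [hg, hm, ENNReal.toReal_inv, ENNReal.toReal_add] using this
  have hgpos : ∀ n x, 0 < g n x := fun n x =>
    lt_of_lt_of_le (by positivity) (hglb n x)
  -- measurability
  have hcmeas : ∀ n, Measurable (c n) := fun n =>
    (measurable_id.max measurable_const).min measurable_const
  have hgmeas : ∀ n, Measurable (g n) := fun n =>
    ENNReal.measurable_toReal.comp (hcmeas n)
  -- the densities
  set w : ℝ → ℝ≥0∞ := fun x => ENNReal.ofReal (x / (1 + x ^ 2)) with hw
  set w' : ℝ → ℝ≥0∞ := fun x => ENNReal.ofReal ((1 + x ^ 2) / x) with hw'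
  have hwmeas : Measurable w := by
    exact ENNReal.measurable_ofReal.comp (measurable_id.div ((measurable_const.add (measurable_id.pow_const 2))))
  have hw'meas : Measurable w' := by
    exact ENNReal.measurable_ofReal.comp (((measurable_const.add (measurable_id.pow_const 2))).div measurable_id)
  have hmul : ∀ x : ℝ, 0 < x → w' x * w x = 1 := by
    intro x hx
    rw [hw, hw', ← ENNReal.ofReal_mul (by positivity)]
    have : (1 + x ^ 2) / x * (x / (1 + x ^ 2)) = 1 := by
      field_simp
    rw [this, ENNReal.ofReal_one]
  -- the measures
  set μ : ℕ → Measure ℝ := fun n => (ν.map (g n)).withDensity w' with hμ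
  have hmapfin : ∀ n, IsFiniteMeasure (ν.map (g n)) := fun n =>
    Measure.isFiniteMeasure_map ν (g n)
  -- key computation : Wmap (μ n) = ν.map (c n)
  have hkey : ∀ n, Wmap (μ n) = ν.map (c n) := by
    intro n
    have h1 : (μ n).withDensity w = (ν.map (g n)).withDensity (fun x => w' x * w x) :=
      (withDensity_mul _ hw'meas hwmeas).symm
    have h2 : (ν.map (g n)).withDensity (fun x => w' x * w x) = ν.map (g n) := by
      conv_rhs => rw [← withDensity_one (μ := ν.map (g n))]
      apply withDensity_congr_ae
      have hset : MeasurableSet {y : ℝ | w' y * w y = 1} := by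
        have hs2 : {y : ℝ | w' y * w y = 1} = (fun y => w' y * w y) ⁻¹' {1} := by
          ext y; simp
        rw [hs2]
        exact (hw'meas.mul hwmeas) (measurableSet_singleton 1)
      have hae : ∀ᵐ x ∂(ν.map (g n)), w' x * w x = 1 := by
        rw [ae_map_iff (hgmeas n).aemeasurable hset]
        exact ae_of_all _ fun x => hmul _ (hgpos n x)
      filter_upwards [hae] with x hx
      simpa using hx
    rw [Wmap, h1, h2, Measure.map_map ENNReal.measurable_ofReal (hgmeas n)]
    congr 1
    funext x
    simp only [Function.comp_apply, hg]
    exact ENNReal.ofReal_toReal (hclt n x).ne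
  -- finiteness of μ n
  have hfin : ∀ n, IsFiniteMeasure (μ n) := by
    intro n
    constructor
    rw [hμ]
    rw [withDensity_apply _ MeasurableSet.univ]
    have hb : ∀ᵐ x ∂(ν.map (g n)), w' x ≤ ENNReal.ofReal (2 * (n + 1)) := by
      rw [ae_map_iff (hgmeas n).aemeasurable]
      · refine ae_of_all _ fun x => ?_
        simp only [hw']
        apply ENNReal.ofReal_le_ofReal
        have h1 : (1 + g n x ^ 2) / g n x = (g n x)⁻¹ + g n x := by
          rw [add_div, one_div, sq, mul_self_div_self]
        rw [h1]
        have hle1 : (g n x)⁻¹ ≤ (n + 1 : ℝ) := by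
          have h2 := inv_anti₀ (by positivity : (0:ℝ) < ((n : ℝ) + 1)⁻¹) (hglb n x)
          simpa using h2
        nlinarith [hgub n x]
      · exact hw'meas measurableSet_Iic
    calc ∫⁻ x in Set.univ, w' x ∂(ν.map (g n))
        ≤ ∫⁻ _ in Set.univ, ENNReal.ofReal (2 * (n + 1)) ∂(ν.map (g n)) := by
          apply setLIntegral_mono_ae' MeasurableSet.univ
          filter_upwards [hb] with x hx _ using hx
      _ < ⊤ := by
          haveI := hmapfin n
          rw [setLIntegral_const]
          exact ENNReal.mul_lt_top ENNReal.ofReal_lt_top (measure_lt_top _ _)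
  -- support condition
  have hsupp : ∀ n, μ n {x : ℝ | x ≤ 0} = 0 := by
    intro n
    rw [hμ]
    have hS : MeasurableSet {x : ℝ | x ≤ 0} := measurableSet_Iic
    rw [withDensity_apply _ hS]
    have h0 : (ν.map (g n)) {x : ℝ | x ≤ 0} = 0 := by
      rw [Measure.map_apply (hgmeas n) hS]
      have he : (g n) ⁻¹' {x : ℝ | x ≤ 0} = ∅ := by
        ext x
        simp [(hgpos n x).not_ge]
      rw [he, measure_empty]
    exact setLIntegral_measure_zero _ _ h0
  refine ⟨μ, hfin, hsupp, fun n => ?_, fun f => ?_⟩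
  · rw [hkey n, Measure.map_apply (hcmeas n) MeasurableSet.univ, Set.preimage_univ]
  · -- weak-* convergence via dominated convergence
    have hint : ∀ n, ∫ x, f x ∂(Wmap (μ n)) = ∫ x, f (c n x) ∂ν := by
      intro n
      rw [hkey n]
      exact integral_map (hcmeas n).aemeasurable f.continuous.aestronglyMeasurable
    simp only [hint]
    set F : BoundedContinuousFunction ℝ≥0∞ ℂ := BoundedContinuousFunction.mkOfCompact f with hF
    apply tendsto_integral_of_dominated_convergence (bound := fun _ => ‖F‖)
    · exact fun n => (f.continuous.measurable.comp (hcmeas n)).aestronglyMeasurable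
    · exact integrable_const _
    · intro n
      exact ae_of_all _ fun x => F.norm_coe_le_norm (c n x)
    · refine ae_of_all _ fun x => ?_
      apply (f.continuous.tendsto x).comp
      have htop : Tendsto (fun n : ℕ => m n) atTop (𝓝 ⊤) :=
        ENNReal.tendsto_nat_nhds_top.comp (tendsto_add_atTop_nat 1)
      have h0 : Tendsto (fun n : ℕ => (m n)⁻¹) atTop (𝓝 0) := by
        simpa using ENNReal.tendsto_inv_iff.2 htop
      have h1 : Tendsto (fun n : ℕ => max x (m n)⁻¹) atTop (𝓝 x) := by
        simpa using (tendsto_const_nhds : Tendsto (fun _ : ℕ => x) atTop (𝓝 x)).max h0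
      simpa [hc, min_eq_left (le_top : x ≤ ⊤)] using h1.min htop
end

section
/- Let f ∈ L¹_loc(ℝ,ℂ) and let p ∈ ℝ be a Lebesgue point of f. Let (k_n)_{n∈ℕ} be a sequence of non-negative functions, each continuous on [p − 1/√n, p + 1/√n] and continuously differentiable on (p − 1/√n, p + 1/√n), with ∫_{(p−1/√n, p+1/√n)} k_n(x) dx = 1 for all n. Suppose there are constants r, R > 0 such that for every n: max{ k_n(p − 1/√n), k_n(p + 1/√n) } ≤ R·√n, k_n'(x) ≥ 0 for all x ∈ (p − 1/√n, p − 1/n), |k_n'(x)| ≤ r·n² for all x ∈ (p − 1/n, p + 1/n), and k_n'(x) ≤ 0 for all x ∈ (p + 1/n, p + 1/√n). Then lim_{n→∞} ∫_{(p−1/√n, p+1/√n)} k_n(x) f(x) dx = f(p). -/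
open MeasureTheory Filter Topology

section AuxLemmas

private lemma my_swap (u v : ℝ → ℝ) (c b : ℝ)
    (hu : IntegrableOn u (Set.Ioo c b)) (hv : IntegrableOn v (Set.Ioo c b)) :
    ∫ x in Set.Ioo c b, (∫ t in Set.Ioo c x, u t) * v x
      = ∫ t in Set.Ioo c b, u t * ∫ x in Set.Ioo t b, v x := by
  set U : ℝ → ℝ := (Set.Ioo c b).indicator u with hU
  set V : ℝ → ℝ := (Set.Ioo c b).indicator v with hV
  have hUi : Integrable U := (integrable_indicator_iff measurableSet_Ioo).2 hu
  have hVi : Integrable V := (integrable_indicator_iff measurableSet_Ioo).2 hv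
  set W : ℝ → ℝ → ℝ := fun x t => {q : ℝ × ℝ | q.2 < q.1}.indicator
    (fun q => U q.2 * V q.1) (x, t) with hW
  have hWmeas : MeasurableSet {q : ℝ × ℝ | q.2 < q.1} :=
    measurableSet_lt measurable_snd measurable_fst
  have hWint : Integrable (Function.uncurry W) ((volume : Measure ℝ).prod volume) := by
    have h1 : Integrable (fun q : ℝ × ℝ => V q.1 * U q.2)
        ((volume : Measure ℝ).prod volume) := hVi.mul_prod hUi
    have : Function.uncurry W =
        {q : ℝ × ℝ | q.2 < q.1}.indicator (fun q => V q.1 * U q.2) := by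
      funext q
      simp only [Function.uncurry, hW, Set.indicator]
      by_cases h : q.2 < q.1 <;> simp [h, mul_comm]
    rw [this]
    exact h1.indicator hWmeas
  have key := MeasureTheory.integral_integral_swap hWint
  have hL : (∫ x : ℝ, ∫ t : ℝ, W x t) = ∫ x in Set.Ioo c b, (∫ t in Set.Ioo c x, u t) * v x := by
    have inner : ∀ x : ℝ, (∫ t : ℝ, W x t) = (∫ t in Set.Iio x, U t) * V x := by
      intro x
      have : (fun t => W x t) = Set.indicator (Set.Iio x) (fun t => U t * V x) := by
        funext t
        simp only [hW, Set.indicator, Set.mem_setOf_eq, Set.mem_Iio]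
      rw [this, integral_indicator measurableSet_Iio, integral_mul_const]
    simp only [inner]
    have : (fun x => (∫ t in Set.Iio x, U t) * V x)
        = Set.indicator (Set.Ioo c b) (fun x => (∫ t in Set.Iio x, U t) * v x) := by
      funext x
      simp only [hV, Set.indicator]
      by_cases h : x ∈ Set.Ioo c b <;> simp [h]
    rw [this, integral_indicator measurableSet_Ioo]
    refine setIntegral_congr_fun measurableSet_Ioo (fun x hx => ?_)
    congr 1
    rw [hU, setIntegral_indicator measurableSet_Ioo]
    have hset : Set.Iio x ∩ Set.Ioo c b = Set.Ioo c x := by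
      ext t
      simp only [Set.mem_inter_iff, Set.mem_Iio, Set.mem_Ioo]
      exact ⟨fun h => ⟨h.2.1, h.1⟩, fun h => ⟨h.2, h.1, h.2.trans_le hx.2.le⟩⟩
    rw [hset]
  have hR : (∫ t : ℝ, ∫ x : ℝ, W x t) = ∫ t in Set.Ioo c b, u t * ∫ x in Set.Ioo t b, v x := by
    have inner : ∀ t : ℝ, (∫ x : ℝ, W x t) = U t * (∫ x in Set.Ioi t, V x) := by
      intro t
      have : (fun x => W x t) = Set.indicator (Set.Ioi t) (fun x => U t * V x) := by
        funext x
        simp only [hW, Set.indicator, Set.mem_setOf_eq, Set.mem_Ioi]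
      rw [this, integral_indicator measurableSet_Ioi, integral_const_mul]
    simp only [inner]
    have : (fun t => U t * (∫ x in Set.Ioi t, V x))
        = Set.indicator (Set.Ioo c b) (fun t => u t * (∫ x in Set.Ioi t, V x)) := by
      funext t
      simp only [hU, Set.indicator]
      by_cases h : t ∈ Set.Ioo c b <;> simp [h]
    rw [this, integral_indicator measurableSet_Ioo]
    refine setIntegral_congr_fun measurableSet_Ioo (fun t ht => ?_)
    congr 1
    rw [hV, setIntegral_indicator measurableSet_Ioo]
    have hset : Set.Ioi t ∩ Set.Ioo c b = Set.Ioo t b := by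
      ext x
      simp only [Set.mem_inter_iff, Set.mem_Ioi, Set.mem_Ioo]
      exact ⟨fun h => ⟨h.1, h.2.2⟩, fun h => ⟨h.1, ht.1.trans h.1, h.2⟩⟩
    rw [hset]
  rw [← hL, ← hR, key]

private lemma my_tail_left (k k' g : ℝ → ℝ) (p η a b : ℝ) (hη : 0 ≤ η)
    (hab : a < b) (hbp : b < p)
    (hk0 : ∀ x ∈ Set.Icc a b, 0 ≤ k x)
    (hkc : ContinuousOn k (Set.Icc a b))
    (hkd : ∀ x ∈ Set.Ioc a b, HasDerivAt k (k' x) x)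
    (hk'c : ContinuousOn k' (Set.Ioc a b))
    (hk'0 : ∀ x ∈ Set.Ioo a b, 0 ≤ k' x)
    (hg0 : ∀ x, 0 ≤ g x)
    (hgi : IntegrableOn g (Set.Ioo a b))
    (hgb : ∀ t ∈ Set.Ico a b, (∫ x in Set.Ioo t b, g x) ≤ η * (p - t)) :
    (∫ x in Set.Ioo a b, k x * g x)
      ≤ η * (k b * (p - b)) + η * ∫ x in Set.Ioo a b, k x := by
  obtain ⟨C0, hC0⟩ := isCompact_Icc.exists_bound_of_continuousOn hkc
  have hIk : IntegrableOn k (Set.Ioo a b) :=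
    (hkc.integrableOn_Icc).mono_set Set.Ioo_subset_Icc_self
  have hkg_i : IntegrableOn (fun x => k x * g x) (Set.Ioo a b) := by
    refine Integrable.bdd_mul (c := C0) hgi ?_ ?_
    · exact ((hkc.mono Set.Ioo_subset_Icc_self).aestronglyMeasurable measurableSet_Ioo)
    · filter_upwards [ae_restrict_mem measurableSet_Ioo] with x hx
      exact hC0 x (Set.Ioo_subset_Icc_self hx)
  have hIknn : (0:ℝ) ≤ ∫ x in Set.Ioo a b, k x :=
    setIntegral_nonneg measurableSet_Ioo (fun x hx => hk0 x (Set.Ioo_subset_Icc_self hx))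
  have hkb0 : 0 ≤ k b := hk0 b ⟨hab.le, le_refl b⟩
  have hM0 : (0:ℝ) ≤ η * (k b * (p - b)) + η * ∫ x in Set.Ioo a b, k x :=
    add_nonneg (mul_nonneg hη (mul_nonneg hkb0 (by linarith))) (mul_nonneg hη hIknn)
  have step : ∀ c ∈ Set.Ioo a b, (∫ x in Set.Ioo c b, k x * g x)
      ≤ η * (k b * (p - b)) + η * ∫ x in Set.Ioo a b, k x := by
    intro c hc
    have hca : a < c := hc.1
    have hcb : c < b := hc.2
    have hIccsub : Set.Icc c b ⊆ Set.Ioc a b := fun x hx => ⟨hca.trans_le hx.1, hx.2⟩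
    have hsub : Set.Ioo c b ⊆ Set.Ioo a b := fun x hx => ⟨hca.trans hx.1, hx.2⟩
    have ftc : ∀ x ∈ Set.Ioo c b, k x - k c = ∫ t in Set.Ioo c x, k' t := by
      intro x hx
      have h1 : ∫ t in c..x, k' t = k x - k c := by
        apply intervalIntegral.integral_eq_sub_of_hasDerivAt
        · intro t ht
          rw [Set.uIcc_of_le hx.1.le] at ht
          exact hkd t (hIccsub ⟨ht.1, ht.2.trans hx.2.le⟩)
        · apply ContinuousOn.intervalIntegrable
          apply hk'c.mono
          rw [Set.uIcc_of_le hx.1.le]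
          exact fun t ht => hIccsub ⟨ht.1, ht.2.trans hx.2.le⟩
      rw [← h1, intervalIntegral.integral_of_le hx.1.le,
        MeasureTheory.integral_Ioc_eq_integral_Ioo]
    have hgi' : IntegrableOn g (Set.Ioo c b) := hgi.mono_set hsub
    have hkgi' : IntegrableOn (fun x => k x * g x) (Set.Ioo c b) := hkg_i.mono_set hsub
    have hk'i : IntegrableOn k' (Set.Ioo c b) :=
      ((hk'c.mono hIccsub).integrableOn_Icc).mono_set Set.Ioo_subset_Icc_self
    have split : (∫ x in Set.Ioo c b, (k x - k c) * g x)
        = (∫ x in Set.Ioo c b, k x * g x) - k c * ∫ x in Set.Ioo c b, g x := by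
      simp_rw [sub_mul]
      rw [integral_sub hkgi' (hgi'.const_mul (k c)), integral_const_mul]
    have Tswap : (∫ x in Set.Ioo c b, (k x - k c) * g x)
        = ∫ t in Set.Ioo c b, k' t * ∫ x in Set.Ioo t b, g x := by
      rw [setIntegral_congr_fun measurableSet_Ioo
        (fun x hx => by
          show (k x - k c) * g x = (∫ t in Set.Ioo c x, k' t) * g x
          rw [ftc x hx] : Set.EqOn (fun x => (k x - k c) * g x)
          (fun x => (∫ t in Set.Ioo c x, k' t) * g x) (Set.Ioo c b))]
      exact my_swap k' g c b hk'i hgi'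
    have hRHScont : ContinuousOn (fun t => k' t * (η * (p - t))) (Set.Icc c b) :=
      (hk'c.mono hIccsub).mul
        ((continuous_const.mul (continuous_const.sub continuous_id)).continuousOn)
    have hTb : (∫ t in Set.Ioo c b, k' t * ∫ x in Set.Ioo t b, g x)
        ≤ ∫ t in Set.Ioo c b, k' t * (η * (p - t)) := by
      apply integral_mono_of_nonneg
      · filter_upwards [ae_restrict_mem measurableSet_Ioo] with t ht
        exact mul_nonneg (hk'0 t (hsub ht))
          (setIntegral_nonneg measurableSet_Ioo fun x _ => hg0 x)
      · exact hRHScont.integrableOn_Icc.mono_set Set.Ioo_subset_Icc_self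
      · filter_upwards [ae_restrict_mem measurableSet_Ioo] with t ht
        exact mul_le_mul_of_nonneg_left (hgb t ⟨(hca.trans ht.1).le, ht.2⟩)
          (hk'0 t (hsub ht))
    have ibp : (∫ t in Set.Ioo c b, k' t * (p - t))
        = (k b * (p - b) - k c * (p - c)) + ∫ t in Set.Ioo c b, k t := by
      have hF : ∀ t ∈ Set.uIcc c b,
          HasDerivAt (fun t => k t * (p - t)) (k' t * (p - t) + k t * (-1)) t := by
        intro t ht
        rw [Set.uIcc_of_le hcb.le] at ht
        have h1 : HasDerivAt (fun y : ℝ => p - y) (-1) t := by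
          simpa using (hasDerivAt_id t).const_sub p
        exact (hkd t (hIccsub ht)).mul h1
      have hcont2 : ContinuousOn (fun t => k' t * (p - t) + k t * (-1)) (Set.Icc c b) :=
        ((hk'c.mono hIccsub).mul
            ((continuous_const.sub continuous_id).continuousOn)).add
          ((hkc.mono (fun t ht => ⟨hca.le.trans ht.1, ht.2⟩)).mul continuousOn_const)
      have hint2 : IntervalIntegrable (fun t => k' t * (p - t) + k t * (-1)) volume c b := by
        apply ContinuousOn.intervalIntegrable
        rwa [Set.uIcc_of_le hcb.le]
      have heq := intervalIntegral.integral_eq_sub_of_hasDerivAt hF hint2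
      rw [intervalIntegral.integral_of_le hcb.le,
        MeasureTheory.integral_Ioc_eq_integral_Ioo] at heq
      have int1 : IntegrableOn (fun t => k' t * (p - t)) (Set.Ioo c b) :=
        (((hk'c.mono hIccsub).mul
          ((continuous_const.sub continuous_id).continuousOn)).integrableOn_Icc).mono_set
          Set.Ioo_subset_Icc_self
      have int2 : IntegrableOn (fun t => k t * (-1:ℝ)) (Set.Ioo c b) :=
        (hIk.mono_set hsub).mul_const (-1)
      rw [integral_add int1 int2] at heq
      have : ∫ t in Set.Ioo c b, k t * (-1:ℝ) = -∫ t in Set.Ioo c b, k t := by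
        simp [mul_neg_one, integral_neg]
      rw [this] at heq
      linarith [heq]
    have hfirst : k c * (∫ x in Set.Ioo c b, g x) ≤ k c * (η * (p - c)) :=
      mul_le_mul_of_nonneg_left (hgb c ⟨hca.le, hcb⟩) (hk0 c ⟨hca.le, hcb.le⟩)
    have hpull : (∫ t in Set.Ioo c b, k' t * (η * (p - t)))
        = η * ∫ t in Set.Ioo c b, k' t * (p - t) := by
      rw [← integral_const_mul]
      exact setIntegral_congr_fun measurableSet_Ioo (fun t _ => by ring)
    have hIle : (∫ t in Set.Ioo c b, k t) ≤ ∫ t in Set.Ioo a b, k t := by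
      apply setIntegral_mono_set hIk
      · filter_upwards [ae_restrict_mem measurableSet_Ioo] with x hx
        exact hk0 x (Set.Ioo_subset_Icc_self hx)
      · exact HasSubset.Subset.eventuallyLE hsub
    have hchain : (∫ x in Set.Ioo c b, k x * g x)
        = k c * (∫ x in Set.Ioo c b, g x) + ∫ x in Set.Ioo c b, (k x - k c) * g x := by
      rw [split]; ring
    rw [hchain, Tswap]
    have h2 : (∫ t in Set.Ioo c b, k' t * ∫ x in Set.Ioo t b, g x)
        ≤ η * ((k b * (p - b) - k c * (p - c)) + ∫ t in Set.Ioo c b, k t) := by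
      rw [← ibp, ← hpull]; exact hTb
    have h3 : η * (∫ t in Set.Ioo c b, k t) ≤ η * ∫ t in Set.Ioo a b, k t :=
      mul_le_mul_of_nonneg_left hIle hη
    nlinarith [hfirst, h2, h3]
  have hUnion : (⋃ m : ℕ, Set.Ioo (a + (b - a)/(m+1)) b) = Set.Ioo a b := by
    ext x
    simp only [Set.mem_iUnion, Set.mem_Ioo]
    constructor
    · rintro ⟨m, h1, h2⟩
      refine ⟨lt_of_le_of_lt ?_ h1, h2⟩
      have : (0:ℝ) ≤ (b - a)/(m+1) := div_nonneg (by linarith) (by positivity)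
      linarith
    · rintro ⟨h1, h2⟩
      obtain ⟨m, hm⟩ := exists_nat_gt ((b - a)/(x - a))
      have hxa : (0:ℝ) < x - a := by linarith
      refine ⟨m, ?_, h2⟩
      have h3 : b - a < m * (x - a) := by
        have := (div_lt_iff₀ hxa).1 hm
        linarith
      have h4 : (b - a)/(m+1) < x - a := by
        rw [div_lt_iff₀ (by positivity)]
        nlinarith
      linarith
  have hmono : Monotone (fun m : ℕ => Set.Ioo (a + (b - a)/(m+1)) b) := by
    intro m m' hmm'
    apply Set.Ioo_subset_Ioo_left
    have hle : (b - a)/((m':ℝ)+1) ≤ (b - a)/((m:ℝ)+1) := by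
      apply div_le_div_of_nonneg_left (by linarith) (by positivity)
      exact_mod_cast Nat.succ_le_succ hmm'
    linarith
  have htend := MeasureTheory.tendsto_setIntegral_of_monotone
    (fun m : ℕ => measurableSet_Ioo) hmono (by rw [hUnion]; exact hkg_i)
  rw [hUnion] at htend
  refine le_of_tendsto htend ?_
  filter_upwards [Filter.eventually_ge_atTop 1] with m hm
  have hm1 : (2:ℝ) ≤ (m:ℝ) + 1 := by exact_mod_cast Nat.succ_le_succ hm
  have hc1 : a < a + (b - a)/(m+1) := by
    have : (0:ℝ) < (b - a)/(m+1) := div_pos (by linarith) (by positivity)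
    linarith
  have hc2 : a + (b - a)/(m+1) < b := by
    have h5 : (b - a)/((m:ℝ)+1) ≤ (b - a)/2 := by
      apply div_le_div_of_nonneg_left (by linarith) (by norm_num) hm1
    linarith
  exact step _ ⟨hc1, hc2⟩

private lemma my_reflect (F : ℝ → ℝ) {u v : ℝ} (huv : u ≤ v) :
    ∫ x in Set.Ioo u v, F (-x) = ∫ x in Set.Ioo (-v) (-u), F x := by
  rw [← MeasureTheory.integral_Ioc_eq_integral_Ioo, ← intervalIntegral.integral_of_le huv,
    intervalIntegral.integral_comp_neg, intervalIntegral.integral_of_le (by linarith),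
    MeasureTheory.integral_Ioc_eq_integral_Ioo]

private lemma my_integrableOn_comp_neg {F : ℝ → ℝ} {u v : ℝ}
    (h : IntegrableOn F (Set.Ioo u v)) :
    IntegrableOn (fun x => F (-x)) (Set.Ioo (-v) (-u)) := by
  have hemb : MeasurableEmbedding (fun x : ℝ => -x) :=
    (MeasurableEquiv.neg ℝ).measurableEmbedding
  have hmp : MeasurePreserving (fun x : ℝ => -x) (volume : Measure ℝ) volume :=
    Measure.measurePreserving_neg _
  have h1 : Integrable ((Set.Ioo u v).indicator F ∘ fun x : ℝ => -x) volume :=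
    (hmp.integrable_comp_emb hemb).2 ((integrable_indicator_iff measurableSet_Ioo).2 h)
  have h2 : ((Set.Ioo u v).indicator F ∘ fun x : ℝ => -x)
      = (Set.Ioo (-v) (-u)).indicator (fun x => F (-x)) := by
    funext x
    by_cases hx : x ∈ Set.Ioo (-v) (-u)
    · have hx' : -x ∈ Set.Ioo u v := ⟨by linarith [hx.2], by linarith [hx.1]⟩
      simp [Function.comp, Set.indicator_of_mem hx', Set.indicator_of_mem hx]
    · have hx' : -x ∉ Set.Ioo u v := by
        simp only [Set.mem_Ioo, not_and_or, not_lt] at hx ⊢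
        rcases hx with h | h
        · right; linarith
        · left; linarith
      simp [Function.comp, Set.indicator_of_notMem hx', Set.indicator_of_notMem hx]
  rw [h2] at h1
  exact (integrable_indicator_iff measurableSet_Ioo).1 h1

private lemma my_tail_right (k k' g : ℝ → ℝ) (p η c d : ℝ) (hη : 0 ≤ η)
    (hcd : c < d) (hpc : p < c)
    (hk0 : ∀ x ∈ Set.Icc c d, 0 ≤ k x)
    (hkc : ContinuousOn k (Set.Icc c d))
    (hkd : ∀ x ∈ Set.Ico c d, HasDerivAt k (k' x) x)
    (hk'c : ContinuousOn k' (Set.Ico c d))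
    (hk'0 : ∀ x ∈ Set.Ioo c d, k' x ≤ 0)
    (hg0 : ∀ x, 0 ≤ g x)
    (hgi : IntegrableOn g (Set.Ioo c d))
    (hgb : ∀ t ∈ Set.Ioc c d, (∫ x in Set.Ioo c t, g x) ≤ η * (t - p)) :
    (∫ x in Set.Ioo c d, k x * g x)
      ≤ η * (k c * (c - p)) + η * ∫ x in Set.Ioo c d, k x := by
  have hmaps : ∀ x ∈ Set.Icc (-d) (-c), -x ∈ Set.Icc c d := by
    intro x hx; exact ⟨by linarith [hx.2], by linarith [hx.1]⟩
  have hmaps2 : ∀ x ∈ Set.Ioc (-d) (-c), -x ∈ Set.Ico c d := by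
    intro x hx; exact ⟨by linarith [hx.2], by linarith [hx.1]⟩
  have hmaps3 : ∀ x ∈ Set.Ioo (-d) (-c), -x ∈ Set.Ioo c d := by
    intro x hx; exact ⟨by linarith [hx.2], by linarith [hx.1]⟩
  have key := my_tail_left (fun x => k (-x)) (fun x => -k' (-x)) (fun x => g (-x))
    (-p) η (-d) (-c) hη (by linarith) (by linarith)
    (fun x hx => hk0 (-x) (hmaps x hx))
    (hkc.comp continuous_neg.continuousOn hmaps)
    (fun x hx => by
      have h1 := hkd (-x) (hmaps2 x hx)
      have h2 : HasDerivAt (fun y : ℝ => -y) (-1) x := hasDerivAt_neg x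
      have := h1.comp x h2
      rw [mul_neg_one] at this; exact this)
    ((hk'c.comp continuous_neg.continuousOn hmaps2).neg)
    (fun x hx => by simpa using neg_nonneg.2 (hk'0 (-x) (hmaps3 x hx)))
    (fun x => hg0 (-x))
    (my_integrableOn_comp_neg hgi)
    (fun t ht => by
      have hrefl : ∫ x in Set.Ioo t (-c), g (-x) = ∫ x in Set.Ioo c (-t), g x :=
        (by simpa using my_reflect g (u := t) (v := -c) (by linarith [ht.2]))
      rw [hrefl]
      have h3 := hgb (-t) ⟨by linarith [ht.2], by linarith [ht.1]⟩
      calc (∫ x in Set.Ioo c (-t), g x) ≤ η * (-t - p) := h3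
        _ = η * (-p - t) := by ring)
  have hL : ∫ x in Set.Ioo (-d) (-c), k (-x) * g (-x) = ∫ x in Set.Ioo c d, k x * g x := by
    simpa using my_reflect (fun x => k x * g x) (u := -d) (v := -c) (by linarith)
  have hR : ∫ x in Set.Ioo (-d) (-c), k (-x) = ∫ x in Set.Ioo c d, k x := by
    simpa using my_reflect k (u := -d) (v := -c) (by linarith)
  rw [hL, hR] at key
  simpa using key.trans_eq (by ring_nf)

end AuxLemmas

set_option maxHeartbeats 2000000 in
/-- **Approximation at Lebesgue points by concentrating kernels.**
Let `f ∈ L¹_loc(ℝ,ℂ)` and let `p` be a Lebesgue point of `f`.  Let `(k_n)` be a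
sequence of non-negative functions, `k_n` continuous on `[p-1/√n, p+1/√n]` and
continuously differentiable (with derivative `k_n'`) on `(p-1/√n, p+1/√n)`, with
`∫_{(p-1/√n,p+1/√n)} k_n = 1`, and suppose there are `r, R > 0` such that for all `n ≥ 1`:
`max(k_n(p-1/√n), k_n(p+1/√n)) ≤ R√n`, `k_n' ≥ 0` on `(p-1/√n, p-1/n)`,
`|k_n'| ≤ r n²` on `(p-1/n, p+1/n)` and `k_n' ≤ 0` on `(p+1/n, p+1/√n)`.
Then `∫_{(p-1/√n,p+1/√n)} k_n f → f(p)`. -/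
theorem lebesgue_point_kernel_approx (f : ℝ → ℂ)
    (hf : LocallyIntegrable f (volume : Measure ℝ)) (p : ℝ)
    (hleb : Tendsto (fun ε : ℝ => (1 / (2 * ε)) * ∫ x in Set.Ioo (p - ε) (p + ε), ‖f x - f p‖)
      (𝓝[>] 0) (𝓝 0))
    (k k' : ℕ → ℝ → ℝ) (r R : ℝ) (hr : 0 < r) (hR : 0 < R)
    (hpos : ∀ n : ℕ, 1 ≤ n → ∀ x ∈ Set.Icc (p - 1 / Real.sqrt n) (p + 1 / Real.sqrt n), 0 ≤ k n x)
    (hcont : ∀ n : ℕ, 1 ≤ n → ContinuousOn (k n) (Set.Icc (p - 1 / Real.sqrt n) (p + 1 / Real.sqrt n)))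
    (hderiv : ∀ n : ℕ, 1 ≤ n → ∀ x ∈ Set.Ioo (p - 1 / Real.sqrt n) (p + 1 / Real.sqrt n),
      HasDerivAt (k n) (k' n x) x)
    (hderivcont : ∀ n : ℕ, 1 ≤ n →
      ContinuousOn (k' n) (Set.Ioo (p - 1 / Real.sqrt n) (p + 1 / Real.sqrt n)))
    (hint : ∀ n : ℕ, 1 ≤ n →
      (∫ x in Set.Ioo (p - 1 / Real.sqrt n) (p + 1 / Real.sqrt n), k n x) = 1)
    (hbound : ∀ n : ℕ, 1 ≤ n →
      max (k n (p - 1 / Real.sqrt n)) (k n (p + 1 / Real.sqrt n)) ≤ R * Real.sqrt n)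
    (hincr : ∀ n : ℕ, 1 ≤ n → ∀ x ∈ Set.Ioo (p - 1 / Real.sqrt n) (p - 1 / n), 0 ≤ k' n x)
    (hmid : ∀ n : ℕ, 1 ≤ n → ∀ x ∈ Set.Ioo (p - 1 / (n : ℝ)) (p + 1 / n), |k' n x| ≤ r * (n : ℝ) ^ 2)
    (hdecr : ∀ n : ℕ, 1 ≤ n → ∀ x ∈ Set.Ioo (p + 1 / (n : ℝ)) (p + 1 / Real.sqrt n), k' n x ≤ 0) :
    Tendsto (fun n : ℕ => ∫ x in Set.Ioo (p - 1 / Real.sqrt n) (p + 1 / Real.sqrt n),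
      (k n x : ℂ) * f x) atTop (𝓝 (f p)) := by
  set g : ℝ → ℝ := fun x => ‖f x - f p‖ with hgdef
  have hg0 : ∀ x, 0 ≤ g x := fun x => norm_nonneg _
  have hleb' : Tendsto (fun ε : ℝ =>
      (1 / (2 * ε)) * ∫ x in Set.Ioo (p - ε) (p + ε), g x) (𝓝[>] 0) (𝓝 0) := by
    exact hleb
  have hgint : ∀ u v : ℝ, IntegrableOn g (Set.Icc u v) := by
    intro u v
    have h1 : IntegrableOn (fun x => f x - f p) (Set.Icc u v) :=
      (hf.integrableOn_isCompact isCompact_Icc).sub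
        (integrableOn_const measure_Icc_lt_top.ne)
    exact h1.norm
  -- Lebesgue point in handy form
  have hleb2 : ∀ η : ℝ, 0 < η → ∃ δ > 0, ∀ s : ℝ, 0 < s → s < δ →
      (∫ x in Set.Ioo (p - s) (p + s), g x) ≤ η * s := by
    intro η hη
    rw [Metric.tendsto_nhdsWithin_nhds] at hleb'
    obtain ⟨δ, hδ, hδ2⟩ := hleb' (η/2) (by positivity)
    refine ⟨δ, hδ, fun s hs hsδ => ?_⟩
    have h2 := hδ2 (Set.mem_Ioi.2 hs)
      (by rw [Real.dist_eq, sub_zero, abs_of_pos hs]; exact hsδ)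
    rw [Real.dist_eq, sub_zero] at h2
    have h3 : (1 / (2*s)) * (∫ x in Set.Ioo (p - s) (p + s), g x) < η/2 := lt_of_abs_lt h2
    have h4 : (0:ℝ) < 2*s := by linarith
    have h5 : (∫ x in Set.Ioo (p-s) (p+s), g x)
        = (2*s) * ((1/(2*s)) * ∫ x in Set.Ioo (p-s) (p+s), g x) := by
      field_simp
    rw [h5]
    calc (2*s) * ((1/(2*s)) * ∫ x in Set.Ioo (p-s) (p+s), g x)
        ≤ (2*s) * (η/2) := mul_le_mul_of_nonneg_left h3.le h4.le
      _ = η * s := by ring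
  set J : ℕ → ℝ := fun n =>
    ∫ x in Set.Ioo (p - 1 / Real.sqrt n) (p + 1 / Real.sqrt n), k n x * g x with hJdef
  -- the main estimate
  have main : ∀ η : ℝ, 0 < η → ∀ᶠ n : ℕ in atTop, J n ≤ (6*r+5) * η := by
    intro η hη
    obtain ⟨δ, hδ, hδ2⟩ := hleb2 η hη
    have hev2 : ∀ᶠ n : ℕ in atTop, 1 / Real.sqrt n < δ := by
      obtain ⟨N, hN⟩ := exists_nat_gt ((1/δ)^2)
      filter_upwards [eventually_ge_atTop N] with n hn
      have h1 : (1/δ)^2 < (n:ℝ) := hN.trans_le (by exact_mod_cast hn)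
      have h2 : 1/δ < Real.sqrt n := by
        rw [show (1/δ) = Real.sqrt ((1/δ)^2) from (Real.sqrt_sq (by positivity)).symm]
        exact Real.sqrt_lt_sqrt (by positivity) h1
      calc 1/Real.sqrt n < 1/(1/δ) := by
            apply one_div_lt_one_div_of_lt (by positivity) h2
        _ = δ := one_div_one_div δ
    filter_upwards [eventually_ge_atTop 2, hev2] with n hn2 hnδ
    have hn1 : 1 ≤ n := le_trans (by norm_num) hn2
    have hnR : (2:ℝ) ≤ (n:ℝ) := by exact_mod_cast hn2
    have hnpos : (0:ℝ) < n := by linarith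
    set sn : ℝ := Real.sqrt n with hsndef
    have hsq : sn * sn = (n:ℝ) := Real.mul_self_sqrt (by positivity)
    have hsn1 : 1 < sn := by nlinarith [Real.sqrt_nonneg (n:ℝ)]
    have hsn0 : 0 < sn := by linarith
    have hsnlt : sn < (n:ℝ) := by nlinarith
    set a : ℝ := p - 1/sn with hadef
    set b : ℝ := p - 1/(n:ℝ) with hbdef
    set c₀ : ℝ := p + 1/(n:ℝ) with hc₀def
    set d : ℝ := p + 1/sn with hddef
    clear_value sn a b c₀ d
    have hinv : 1/(n:ℝ) < 1/sn := by
      apply one_div_lt_one_div_of_lt hsn0 hsnlt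
    have hinvn : (0:ℝ) < 1/(n:ℝ) := by positivity
    have hinvs : (0:ℝ) < 1/sn := by positivity
    have hab : a < b := by simp only [hadef, hbdef]; linarith
    have hbp : b < p := by simp only [hbdef]; linarith
    have hpc : p < c₀ := by simp only [hc₀def]; linarith
    have hcd : c₀ < d := by simp only [hc₀def, hddef]; linarith
    have had : a < d := by linarith
    have hbc : b < c₀ := by linarith
    have hsnδ : 1/sn < δ := hnδ
    -- basic data for this n, converted to the a/b/c₀/d notation
    have hIccEq : Set.Icc (p - 1 / Real.sqrt n) (p + 1 / Real.sqrt n) = Set.Icc a d := by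
      rw [hadef, hddef, hsndef]
    have hIooEq : Set.Ioo (p - 1 / Real.sqrt n) (p + 1 / Real.sqrt n) = Set.Ioo a d := by
      rw [hadef, hddef, hsndef]
    have hIooEqL : Set.Ioo (p - 1 / Real.sqrt n) (p - 1 / (n:ℝ)) = Set.Ioo a b := by
      rw [hadef, hbdef, hsndef]
    have hIooEqM : Set.Ioo (p - 1 / (n:ℝ)) (p + 1 / (n:ℝ)) = Set.Ioo b c₀ := by
      rw [hbdef, hc₀def]
    have hIooEqR : Set.Ioo (p + 1 / (n:ℝ)) (p + 1 / Real.sqrt n) = Set.Ioo c₀ d := by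
      rw [hc₀def, hddef, hsndef]
    have hk0 : ∀ x ∈ Set.Icc a d, 0 ≤ k n x := by
      rw [← hIccEq]; exact hpos n hn1
    have hkc : ContinuousOn (k n) (Set.Icc a d) := by
      rw [← hIccEq]; exact hcont n hn1
    have hkd : ∀ x ∈ Set.Ioo a d, HasDerivAt (k n) (k' n x) x := by
      rw [← hIooEq]; exact hderiv n hn1
    have hk'c : ContinuousOn (k' n) (Set.Ioo a d) := by
      rw [← hIooEq]; exact hderivcont n hn1
    have hkint : (∫ x in Set.Ioo a d, k n x) = 1 := by
      rw [← hIooEq]; exact hint n hn1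
    have hincr' : ∀ x ∈ Set.Ioo a b, 0 ≤ k' n x := by
      rw [← hIooEqL]; exact hincr n hn1
    have hmid' : ∀ x ∈ Set.Ioo b c₀, |k' n x| ≤ r * (n:ℝ)^2 := by
      rw [← hIooEqM]; exact hmid n hn1
    have hdecr' : ∀ x ∈ Set.Ioo c₀ d, k' n x ≤ 0 := by
      rw [← hIooEqR]; exact hdecr n hn1
    have hkI : IntegrableOn (k n) (Set.Icc a d) := hkc.integrableOn_Icc
    have hkIoo : IntegrableOn (k n) (Set.Ioo a d) := hkI.mono_set Set.Ioo_subset_Icc_self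
    have hknn_ae : 0 ≤ᶠ[ae (volume.restrict (Set.Ioo a d))] (k n) := by
      filter_upwards [ae_restrict_mem measurableSet_Ioo] with x hx
      exact hk0 x (Set.Ioo_subset_Icc_self hx)
    have hsubint : ∀ s : Set ℝ, s ⊆ Set.Ioo a d → MeasurableSet s →
        (∫ x in s, k n x) ≤ 1 := by
      intro s hs hms
      rw [← hkint]
      exact setIntegral_mono_set hkIoo hknn_ae (HasSubset.Subset.eventuallyLE hs)
    -- the sup bound on the middle
    have hmidIoo : Set.Ioo b c₀ ⊆ Set.Ioo a d := fun x hx => ⟨by linarith [hx.1], by linarith [hx.2]⟩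
    have hx₀ : ∃ x₀ ∈ Set.Ioo b c₀, k n x₀ ≤ (n:ℝ) := by
      by_contra hcon
      push_neg at hcon
      have h1 : (n:ℝ) * (volume (Set.Ioo b c₀)).toReal ≤ ∫ x in Set.Ioo b c₀, k n x :=
        setIntegral_ge_of_const_le_real measurableSet_Ioo measure_Ioo_lt_top.ne
          (fun x hx => (hcon x hx).le) (hkIoo.mono_set hmidIoo)
      have h2 : (∫ x in Set.Ioo b c₀, k n x) ≤ 1 := hsubint _ hmidIoo measurableSet_Ioo
      rw [Real.volume_Ioo, ENNReal.toReal_ofReal (by linarith)] at h1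
      have h3 : c₀ - b = 2/(n:ℝ) := by simp only [hc₀def, hbdef]; ring
      rw [h3] at h1
      have h4 : (n:ℝ) * (2/(n:ℝ)) = 2 := by field_simp
      rw [h4] at h1
      linarith
    obtain ⟨x₀, hx₀mem, hx₀le⟩ := hx₀
    have hsupIoo : ∀ x ∈ Set.Ioo b c₀, k n x ≤ (1+2*r)*(n:ℝ) := by
      intro x hx
      have hlip := Convex.norm_image_sub_le_of_norm_hasDerivWithin_le
        (f := k n) (f' := k' n) (s := Set.Ioo b c₀) (C := r * (n:ℝ)^2)
        (fun y hy => (hkd y (hmidIoo hy)).hasDerivWithinAt)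
        (fun y hy => by
          rw [Real.norm_eq_abs]
          exact hmid' y hy)
        (convex_Ioo b c₀) hx₀mem hx
      have hxd : ‖x - x₀‖ ≤ 2/(n:ℝ) := by
        rw [Real.norm_eq_abs, abs_le]
        have e1 : b < x := hx.1
        have e2 : x < c₀ := hx.2
        have e3 : b < x₀ := hx₀mem.1
        have e4 : x₀ < c₀ := hx₀mem.2
        have e5 : c₀ - b = 2/(n:ℝ) := by simp only [hbdef, hc₀def]; ring
        constructor <;> linarith
      have h5 : ‖k n x - k n x₀‖ ≤ r * (n:ℝ)^2 * (2/(n:ℝ)) :=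
        hlip.trans (mul_le_mul_of_nonneg_left hxd (by positivity))
      have h6 : r * (n:ℝ)^2 * (2/(n:ℝ)) = 2*r*(n:ℝ) := by field_simp
      rw [Real.norm_eq_abs] at h5
      have h7 := le_of_abs_le h5
      rw [h6] at h7
      nlinarith
    have hsup : ∀ x ∈ Set.Icc b c₀, k n x ≤ (1+2*r)*(n:ℝ) := by
      intro x hx
      rcases eq_or_lt_of_le hx.1 with h | h
      · have hbmem : b ∈ Set.Icc a d := ⟨by linarith, by linarith⟩
        have hcw : ContinuousWithinAt (k n) (Set.Ioo b c₀) b :=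
          (hkc.continuousWithinAt hbmem).mono
            (fun y hy => ⟨by linarith [hy.1], by linarith [hy.2]⟩)
        have hne : (𝓝[Set.Ioo b c₀] b).NeBot := left_nhdsWithin_Ioo_neBot hbc
        rw [← h]
        exact le_of_tendsto hcw (eventually_nhdsWithin_of_forall hsupIoo)
      rcases eq_or_lt_of_le hx.2 with h2 | h2
      · have hcmem : c₀ ∈ Set.Icc a d := ⟨by linarith, by linarith⟩
        have hcw : ContinuousWithinAt (k n) (Set.Ioo b c₀) c₀ :=
          (hkc.continuousWithinAt hcmem).mono
            (fun y hy => ⟨by linarith [hy.1], by linarith [hy.2]⟩)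
        have hne : (𝓝[Set.Ioo b c₀] c₀).NeBot := right_nhdsWithin_Ioo_neBot hbc
        rw [h2]
        exact le_of_tendsto hcw (eventually_nhdsWithin_of_forall hsupIoo)
      · exact hsupIoo x ⟨h, h2⟩
    -- left tail
    have hleft : (∫ x in Set.Ioo a b, k n x * g x) ≤ η * (1+2*r) + η := by
      have happl := my_tail_left (k n) (k' n) g p η a b hη.le hab hbp
        (fun x hx => hk0 x ⟨hx.1, by linarith [hx.2]⟩)
        (hkc.mono (fun x hx => ⟨hx.1, by linarith [hx.2]⟩))
        (fun x hx => hkd x ⟨hx.1, by linarith [hx.2]⟩)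
        (hk'c.mono (fun x hx => ⟨hx.1, by linarith [hx.2]⟩))
        (fun x hx => hincr' x hx)
        hg0 ((hgint a b).mono_set Set.Ioo_subset_Icc_self)
        (fun t ht => by
          have hs0 : 0 < p - t := by linarith [ht.2]
          have hsle : p - t ≤ 1/sn := by linarith [ht.1]
          have hsub2 : Set.Ioo t b ⊆ Set.Ioo (p - (p - t)) (p + (p - t)) := by
            intro y hy
            constructor
            · simpa using hy.1
            · have : y < b := hy.2; linarith
          have hmono2 : (∫ x in Set.Ioo t b, g x)
              ≤ ∫ x in Set.Ioo (p - (p-t)) (p + (p-t)), g x := by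
            apply setIntegral_mono_set
              ((hgint (p-(p-t)) (p+(p-t))).mono_set Set.Ioo_subset_Icc_self)
            · filter_upwards [ae_restrict_mem measurableSet_Ioo] with x _
              exact hg0 x
            · exact HasSubset.Subset.eventuallyLE hsub2
          exact hmono2.trans (hδ2 (p - t) hs0 (lt_of_le_of_lt hsle hsnδ)))
      have hkb : k n b ≤ (1+2*r)*(n:ℝ) := hsup b ⟨le_refl b, hbc.le⟩
      have hpb : p - b = 1/(n:ℝ) := by simp only [hbdef]; ring
      have h8 : k n b * (p - b) ≤ (1+2*r) := by
        rw [hpb]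
        calc k n b * (1/(n:ℝ)) ≤ ((1+2*r)*(n:ℝ)) * (1/(n:ℝ)) :=
              mul_le_mul_of_nonneg_right hkb (by positivity)
          _ = 1+2*r := by
              rw [mul_one_div]
              exact mul_div_cancel_right₀ _ (by positivity)
      have h9 : (∫ x in Set.Ioo a b, k n x) ≤ 1 :=
        hsubint _ (fun x hx => ⟨hx.1, by linarith [hx.2]⟩) measurableSet_Ioo
      calc (∫ x in Set.Ioo a b, k n x * g x)
          ≤ η * (k n b * (p - b)) + η * ∫ x in Set.Ioo a b, k n x := happl
        _ ≤ η * (1+2*r) + η * 1 := by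
            apply add_le_add
            · exact mul_le_mul_of_nonneg_left h8 hη.le
            · exact mul_le_mul_of_nonneg_left h9 hη.le
        _ = η * (1+2*r) + η := by ring
    -- right tail
    have hright : (∫ x in Set.Ioo c₀ d, k n x * g x) ≤ η * (1+2*r) + η := by
      have happl := my_tail_right (k n) (k' n) g p η c₀ d hη.le hcd hpc
        (fun x hx => hk0 x ⟨by linarith [hx.1], hx.2⟩)
        (hkc.mono (fun x hx => ⟨by linarith [hx.1], hx.2⟩))
        (fun x hx => hkd x ⟨by linarith [hx.1], hx.2⟩)
        (hk'c.mono (fun x hx => ⟨by linarith [hx.1], hx.2⟩))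
        (fun x hx => hdecr' x hx)
        hg0 ((hgint c₀ d).mono_set Set.Ioo_subset_Icc_self)
        (fun t ht => by
          have hs0 : 0 < t - p := by linarith [ht.1]
          have hsle : t - p ≤ 1/sn := by linarith [ht.2]
          have hsub2 : Set.Ioo c₀ t ⊆ Set.Ioo (p - (t - p)) (p + (t - p)) := by
            intro y hy
            constructor
            · have : c₀ < y := hy.1; linarith
            · simpa using hy.2
          have hmono2 : (∫ x in Set.Ioo c₀ t, g x)
              ≤ ∫ x in Set.Ioo (p - (t-p)) (p + (t-p)), g x := by
            apply setIntegral_mono_set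
              ((hgint (p-(t-p)) (p+(t-p))).mono_set Set.Ioo_subset_Icc_self)
            · filter_upwards [ae_restrict_mem measurableSet_Ioo] with x _
              exact hg0 x
            · exact HasSubset.Subset.eventuallyLE hsub2
          exact hmono2.trans (hδ2 (t - p) hs0 (lt_of_le_of_lt hsle hsnδ)))
      have hkc₀ : k n c₀ ≤ (1+2*r)*(n:ℝ) := hsup c₀ ⟨hbc.le, le_refl c₀⟩
      have hpc₀ : c₀ - p = 1/(n:ℝ) := by simp only [hc₀def]; ring
      have h8 : k n c₀ * (c₀ - p) ≤ (1+2*r) := by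
        rw [hpc₀]
        calc k n c₀ * (1/(n:ℝ)) ≤ ((1+2*r)*(n:ℝ)) * (1/(n:ℝ)) :=
              mul_le_mul_of_nonneg_right hkc₀ (by positivity)
          _ = 1+2*r := by
              rw [mul_one_div]
              exact mul_div_cancel_right₀ _ (by positivity)
      have h9 : (∫ x in Set.Ioo c₀ d, k n x) ≤ 1 :=
        hsubint _ (fun x hx => ⟨by linarith [hx.1], hx.2⟩) measurableSet_Ioo
      calc (∫ x in Set.Ioo c₀ d, k n x * g x)
          ≤ η * (k n c₀ * (c₀ - p)) + η * ∫ x in Set.Ioo c₀ d, k n x := happl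
        _ ≤ η * (1+2*r) + η * 1 := by
            apply add_le_add
            · exact mul_le_mul_of_nonneg_left h8 hη.le
            · exact mul_le_mul_of_nonneg_left h9 hη.le
        _ = η * (1+2*r) + η := by ring
    -- middle
    have hgImid : IntegrableOn g (Set.Ioo b c₀) :=
      (hgint b c₀).mono_set Set.Ioo_subset_Icc_self
    have hmiddle : (∫ x in Set.Ioo b c₀, k n x * g x) ≤ (1+2*r) * η := by
      have h1 : (∫ x in Set.Ioo b c₀, k n x * g x)
          ≤ ∫ x in Set.Ioo b c₀, ((1+2*r)*(n:ℝ)) * g x := by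
        apply integral_mono_of_nonneg
        · filter_upwards [ae_restrict_mem measurableSet_Ioo] with x hx
          exact mul_nonneg (hk0 x (Set.Icc_subset_Icc (by linarith) (by linarith)
            (Set.Ioo_subset_Icc_self hx))) (hg0 x)
        · exact hgImid.const_mul _
        · filter_upwards [ae_restrict_mem measurableSet_Ioo] with x hx
          exact mul_le_mul_of_nonneg_right (hsup x (Set.Ioo_subset_Icc_self hx)) (hg0 x)
      have h2 : (∫ x in Set.Ioo b c₀, ((1+2*r)*(n:ℝ)) * g x)
          = ((1+2*r)*(n:ℝ)) * ∫ x in Set.Ioo b c₀, g x := integral_const_mul _ _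
      have h3 : (∫ x in Set.Ioo b c₀, g x) ≤ η * (1/(n:ℝ)) := by
        have hbeq : b = p - 1/(n:ℝ) := hbdef
        have hceq : c₀ = p + 1/(n:ℝ) := hc₀def
        rw [hbeq, hceq]
        exact hδ2 (1/(n:ℝ)) hinvn (lt_trans hinv hsnδ)
      calc (∫ x in Set.Ioo b c₀, k n x * g x)
          ≤ ((1+2*r)*(n:ℝ)) * ∫ x in Set.Ioo b c₀, g x := by rw [← h2]; exact h1
        _ ≤ ((1+2*r)*(n:ℝ)) * (η * (1/(n:ℝ))) := by
            apply mul_le_mul_of_nonneg_left h3 (by positivity)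
        _ = (1+2*r) * η := by field_simp
    -- splitting
    have hkgI : IntegrableOn (fun x => k n x * g x) (Set.Icc a d) :=
      IntegrableOn.continuousOn_mul hkc (hgint a d) isCompact_Icc
    have hkgIoo : IntegrableOn (fun x => k n x * g x) (Set.Ioo a d) :=
      hkgI.mono_set Set.Ioo_subset_Icc_self
    have hJn : J n = ∫ x in Set.Ioo a d, k n x * g x := by
      simp only [hJdef]
      rw [hIooEq]
    have hsplit : (∫ x in Set.Ioo a d, k n x * g x) = (∫ x in Set.Ioo a b, k n x * g x)
        + (∫ x in Set.Ioo b c₀, k n x * g x) + ∫ x in Set.Ioo c₀ d, k n x * g x := by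
      have hu : Set.Ioo a d = Set.Ioc a b ∪ (Set.Ioc b c₀ ∪ Set.Ioo c₀ d) := by
        ext x
        simp only [Set.mem_Ioo, Set.mem_Ioc, Set.mem_union]
        constructor
        · rintro ⟨h1, h2⟩
          rcases le_or_gt x b with h3 | h3
          · exact Or.inl ⟨h1, h3⟩
          rcases le_or_gt x c₀ with h4 | h4
          · exact Or.inr (Or.inl ⟨h3, h4⟩)
          · exact Or.inr (Or.inr ⟨h4, h2⟩)
        · rintro (⟨h1, h2⟩ | ⟨h1, h2⟩ | ⟨h1, h2⟩)
          · exact ⟨h1, by linarith⟩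
          · exact ⟨by linarith, by linarith⟩
          · exact ⟨by linarith, h2⟩
      have hsub1 : Set.Ioc a b ⊆ Set.Ioo a d := fun x hx => ⟨hx.1, by linarith [hx.2]⟩
      have hsub2 : Set.Ioc b c₀ ⊆ Set.Ioo a d := fun x hx =>
        ⟨by linarith [hx.1], by linarith [hx.2]⟩
      have hsub3 : Set.Ioo c₀ d ⊆ Set.Ioo a d := fun x hx => ⟨by linarith [hx.1], hx.2⟩
      have hd1 : Disjoint (Set.Ioc a b) (Set.Ioc b c₀ ∪ Set.Ioo c₀ d) := by
        rw [Set.disjoint_left]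
        rintro x hx (hy | hy)
        · exact absurd hy.1 (not_lt.2 hx.2)
        · exact absurd (hbc.trans hy.1) (not_lt.2 hx.2)
      have hd2 : Disjoint (Set.Ioc b c₀) (Set.Ioo c₀ d) := by
        rw [Set.disjoint_left]
        rintro x hx hy
        exact absurd hy.1 (not_lt.2 hx.2)
      rw [hu, setIntegral_union hd1 ((measurableSet_Ioc.union measurableSet_Ioo))
          (hkgIoo.mono_set hsub1) (hkgIoo.mono_set (Set.union_subset hsub2 hsub3)),
        setIntegral_union hd2 measurableSet_Ioo (hkgIoo.mono_set hsub2)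
          (hkgIoo.mono_set hsub3),
        MeasureTheory.integral_Ioc_eq_integral_Ioo,
        MeasureTheory.integral_Ioc_eq_integral_Ioo]
      ring
    rw [hJn, hsplit]
    calc (∫ x in Set.Ioo a b, k n x * g x) + (∫ x in Set.Ioo b c₀, k n x * g x)
          + ∫ x in Set.Ioo c₀ d, k n x * g x
        ≤ (η * (1+2*r) + η) + (1+2*r) * η + (η * (1+2*r) + η) :=
          add_le_add (add_le_add hleft hmiddle) hright
      _ = (6*r+5) * η := by ring
  -- J n ≥ 0 eventually
  have hJ0 : ∀ᶠ n : ℕ in atTop, 0 ≤ J n := by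
    filter_upwards [eventually_ge_atTop 1] with n hn1
    apply setIntegral_nonneg measurableSet_Ioo
    intro x hx
    exact mul_nonneg (hpos n hn1 x (Set.Ioo_subset_Icc_self hx)) (hg0 x)
  -- J → 0
  have hJtend : Tendsto J atTop (𝓝 0) := by
    rw [NormedAddCommGroup.tendsto_nhds_zero]
    intro ε hε
    have hK : (0:ℝ) < 6*r+5 := by linarith
    filter_upwards [main (ε/(2*(6*r+5))) (by positivity), hJ0] with n h1 h2
    rw [Real.norm_eq_abs, abs_of_nonneg h2]
    calc J n ≤ (6*r+5) * (ε/(2*(6*r+5))) := h1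
      _ = ε/2 := by field_simp
      _ < ε := by linarith
  -- reduce the goal to J → 0
  rw [← tendsto_sub_nhds_zero_iff]
  apply squeeze_zero_norm' ?_ hJtend
  filter_upwards [eventually_ge_atTop 1] with n hn1
  set a : ℝ := p - 1/Real.sqrt n with hadef
  set d : ℝ := p + 1/Real.sqrt n with hddef
  clear_value a d
  have hIccEq : Set.Icc (p - 1 / Real.sqrt n) (p + 1 / Real.sqrt n) = Set.Icc a d := by
    rw [hadef, hddef]
  have hIooEq : Set.Ioo (p - 1 / Real.sqrt n) (p + 1 / Real.sqrt n) = Set.Ioo a d := by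
    rw [hadef, hddef]
  have hkcn : ContinuousOn (k n) (Set.Icc a d) := by
    rw [← hIccEq]; exact hcont n hn1
  have hk0n : ∀ x ∈ Set.Icc a d, 0 ≤ k n x := by
    rw [← hIccEq]; exact hpos n hn1
  have hkintn : (∫ x in Set.Ioo a d, k n x) = 1 := by
    rw [← hIooEq]; exact hint n hn1
  have hkcC : ContinuousOn (fun x => ((k n x : ℝ) : ℂ)) (Set.Icc a d) :=
    Complex.continuous_ofReal.comp_continuousOn hkcn
  have hint1 : IntegrableOn (fun x => ((k n x : ℝ) : ℂ) * f x) (Set.Ioo a d) :=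
    (IntegrableOn.continuousOn_mul hkcC (hf.integrableOn_isCompact isCompact_Icc)
      isCompact_Icc).mono_set Set.Ioo_subset_Icc_self
  have hint2 : IntegrableOn (fun x => ((k n x : ℝ) : ℂ) * f p) (Set.Ioo a d) :=
    ((hkcC.mul continuousOn_const).integrableOn_Icc).mono_set Set.Ioo_subset_Icc_self
  have hEq : (∫ x in Set.Ioo a d, ((k n x : ℝ) : ℂ) * f x) - f p
      = ∫ x in Set.Ioo a d, ((k n x : ℝ) : ℂ) * (f x - f p) := by
    have h1 : (∫ x in Set.Ioo a d, ((k n x : ℝ) : ℂ) * (f x - f p))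
        = (∫ x in Set.Ioo a d, ((k n x : ℝ) : ℂ) * f x)
          - ∫ x in Set.Ioo a d, ((k n x : ℝ) : ℂ) * f p := by
      simp_rw [mul_sub]
      exact integral_sub hint1 hint2
    rw [h1]
    have h2 : (∫ x in Set.Ioo a d, ((k n x : ℝ) : ℂ) * f p)
        = (∫ x in Set.Ioo a d, ((k n x : ℝ) : ℂ)) * f p := integral_mul_const _ _
    have h3 : (∫ x in Set.Ioo a d, ((k n x : ℝ) : ℂ))
        = ((∫ x in Set.Ioo a d, k n x : ℝ) : ℂ) := integral_ofReal
    rw [h2, h3, hkintn]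
    push_cast
    ring
  have hJn : J n = ∫ x in Set.Ioo a d, k n x * g x := by
    simp only [hJdef]
    rw [hIooEq]
  rw [hEq, hJn]
  have hkgI : IntegrableOn (fun x => k n x * g x) (Set.Ioo a d) :=
    (IntegrableOn.continuousOn_mul hkcn (hgint a d) isCompact_Icc).mono_set
      Set.Ioo_subset_Icc_self
  refine norm_integral_le_of_norm_le hkgI ?_
  filter_upwards [ae_restrict_mem measurableSet_Ioo] with x hx
  rw [norm_mul, Complex.norm_real, Real.norm_eq_abs,
    abs_of_nonneg (hk0n x (Set.Ioo_subset_Icc_self hx))]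
end
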